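/- arXiv:2003.04167 — 4 statements merged into one kernel-verified Lean document; each statement's English description precedes it below -/
import Mathlib

section
/- If $u \in A_q$ and $w \in A_r \cap RH_\infty$ for some $q, r > 1$, then $uw \in A_s$ with $s = q + r - 1$ and $[uw]_{A_s} \leq [w]_{RH_\infty}[u]_{A_q}[w]_{A_r}$. -/
open MeasureTheory Set ENNReal NNReal

noncomputable section

abbrev Rn (n : ℕ) := EuclideanSpace ℝ (Fin n)

variable {n : ℕ}

/-- The closed cube with lower-left corner `x` and side length `r`. -/
def cubeSet (x : Rn n) (r : ℝ) : Set (Rn n) := {y : Rn n | ∀ i, x i ≤ y i ∧ y i ≤ x i + r}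

def IsCube (Q : Set (Rn n)) : Prop := ∃ (x : Rn n) (r : ℝ), 0 < r ∧ Q = cubeSet x r

/-- `w(E) = ∫_E w`. -/
def wInt (w : Rn n → ℝ≥0∞) (E : Set (Rn n)) : ℝ≥0∞ := ∫⁻ x in E, w x

/-- A weight: a measurable, positive, finite, locally integrable function. -/
def IsWeight (w : Rn n → ℝ≥0∞) : Prop :=
  Measurable w ∧ (∀ x, 0 < w x ∧ w x ≠ ∞) ∧ ∀ Q : Set (Rn n), IsCube Q → wInt w Q ≠ ∞

/-- Average of `w` over `Q`. -/
def avgw (w : Rn n → ℝ≥0∞) (Q : Set (Rn n)) : ℝ≥0∞ := wInt w Q / volume Q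

def A1Const (w : Rn n → ℝ≥0∞) : ℝ≥0∞ :=
  ⨆ (Q : Set (Rn n)) (_ : IsCube Q), avgw w Q * (essInf w (volume.restrict Q))⁻¹

def ApConst (p : ℝ) (w : Rn n → ℝ≥0∞) : ℝ≥0∞ :=
  ⨆ (Q : Set (Rn n)) (_ : IsCube Q),
    avgw w Q * (avgw (fun x => w x ^ (1 - p / (p - 1))) Q) ^ (p - 1)

def MemAp (p : ℝ) (w : Rn n → ℝ≥0∞) : Prop :=
  if p = 1 then A1Const w ≠ ∞ else ApConst p w ≠ ∞

def MemAinf (w : Rn n → ℝ≥0∞) : Prop := ∃ p : ℝ, 1 ≤ p ∧ MemAp p w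

def RHinfConst (w : Rn n → ℝ≥0∞) : ℝ≥0∞ :=
  ⨆ (Q : Set (Rn n)) (_ : IsCube Q), (volume Q / wInt w Q) * essSup w (volume.restrict Q)

/-- Weak `L^p` quasinorm with respect to a measure `μ`. -/
def wkNorm {α : Type*} [MeasurableSpace α] (f : α → ℝ≥0∞) (p : ℝ) (μ : Measure α) : ℝ≥0∞ :=
  ⨆ y : ℝ≥0, (y : ℝ≥0∞) * (μ {x | (y : ℝ≥0∞) < f x}) ^ (1 / p)

/-- The measure `w(x) dx`. -/
def wMeasure (w : Rn n → ℝ≥0∞) : Measure (Rn n) := volume.withDensity w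

/-- Weak `L^{p,∞}(w)` quasinorm. -/
def wkNormW (f : Rn n → ℝ≥0∞) (p : ℝ) (w : Rn n → ℝ≥0∞) : ℝ≥0∞ := wkNorm f p (wMeasure w)

/-- Lorentz `L^{p,1}(w)` norm: `p ∫_0^∞ w({|f| > y})^{1/p} dy`. -/
def lorNorm (f : Rn n → ℝ≥0∞) (p : ℝ) (w : Rn n → ℝ≥0∞) : ℝ≥0∞ :=
  ENNReal.ofReal p * ∫⁻ y in Ioi (0 : ℝ), (wMeasure w {x | ENNReal.ofReal y < f x}) ^ (1 / p)

/-- The Hardy–Littlewood maximal operator over cubes. -/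
def HLM (f : Rn n → ℝ≥0∞) (x : Rn n) : ℝ≥0∞ :=
  ⨆ (Q : Set (Rn n)) (_ : IsCube Q) (_ : x ∈ Q), (∫⁻ y in Q, f y) / volume Q

/-- `‖w‖_{A_p^R}`. -/
def AprNorm (p : ℝ) (w : Rn n → ℝ≥0∞) : ℝ≥0∞ :=
  ⨆ (Q : Set (Rn n)) (_ : IsCube Q) (E : Set (Rn n)) (_ : MeasurableSet E) (_ : E ⊆ Q)
    (_ : 0 < wInt w E), (volume E / volume Q) * (wInt w Q / wInt w E) ^ (1 / p)

def MemApr (p : ℝ) (w : Rn n → ℝ≥0∞) : Prop := AprNorm p w ≠ ∞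

/-- `L^{p',∞}(w)` norm, interpreted as `L^∞(w)` when `p = 1`. -/
def dualWkNorm (p : ℝ) (g : Rn n → ℝ≥0∞) (w : Rn n → ℝ≥0∞) : ℝ≥0∞ :=
  if p = 1 then essSup g (wMeasure w) else wkNormW g (p / (p - 1)) w

/-- `[w]_{A_p^R}`. -/
def AprConst (p : ℝ) (w : Rn n → ℝ≥0∞) : ℝ≥0∞ :=
  ⨆ (Q : Set (Rn n)) (_ : IsCube Q),
    wInt w Q ^ (1 / p) * dualWkNorm p (Q.indicator fun x => (w x)⁻¹) w / volume Q

/-- The multi(sub)linear maximal operator `𝓜`. -/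
def curlyM {m : ℕ} (f : Fin m → Rn n → ℝ≥0∞) (x : Rn n) : ℝ≥0∞ :=
  ⨆ (Q : Set (Rn n)) (_ : IsCube Q) (_ : x ∈ Q), ∏ i, (∫⁻ y in Q, f i y) / volume Q

lemma cube_vol_ne_zero {Q : Set (Rn n)} (hQ : IsCube Q) : volume Q ≠ 0 := by
  obtain ⟨x, r, hr, rfl⟩ := hQ
  have hs : cubeSet x r =
      (MeasurableEquiv.toLp 2 (Fin n → ℝ)).symm ⁻¹' (Set.pi Set.univ (fun i => Icc (x i) (x i + r))) := by
    ext y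
    simp only [cubeSet, mem_setOf_eq, mem_preimage, Set.mem_pi, Set.mem_univ, forall_true_left,
      Set.mem_Icc]
    exact ⟨fun h i => ⟨(h i).1, (h i).2⟩, fun h i => ⟨(h i).1, (h i).2⟩⟩
  rw [hs, (EuclideanSpace.volume_preserving_symm_measurableEquiv_toLp (Fin n)).measure_preimage
    (MeasurableSet.univ_pi (fun _ => measurableSet_Icc)).nullMeasurableSet,
    volume_pi_pi]
  simp only [Real.volume_Icc, add_sub_cancel_left]
  exact (Finset.prod_ne_zero_iff).mpr fun i _ => (ENNReal.ofReal_pos.mpr hr).ne'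

lemma cube_vol_ne_top {Q : Set (Rn n)} (hQ : IsCube Q) : volume Q ≠ ∞ := by
  obtain ⟨x, r, hr, rfl⟩ := hQ
  have hs : cubeSet x r =
      (MeasurableEquiv.toLp 2 (Fin n → ℝ)).symm ⁻¹' (Set.pi Set.univ (fun i => Icc (x i) (x i + r))) := by
    ext y
    simp only [cubeSet, mem_setOf_eq, mem_preimage, Set.mem_pi, Set.mem_univ, forall_true_left,
      Set.mem_Icc]
    exact ⟨fun h i => ⟨(h i).1, (h i).2⟩, fun h i => ⟨(h i).1, (h i).2⟩⟩
  rw [hs, (EuclideanSpace.volume_preserving_symm_measurableEquiv_toLp (Fin n)).measure_preimage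
    (MeasurableSet.univ_pi (fun _ => measurableSet_Icc)).nullMeasurableSet,
    volume_pi_pi]
  exact (ENNReal.prod_lt_top fun i _ => measure_Icc_lt_top).ne

lemma wInt_ne_zero {w : Rn n → ℝ≥0∞} (hw : IsWeight w) {Q : Set (Rn n)} (hQ : IsCube Q) :
    wInt w Q ≠ 0 := by
  have hsupp : Function.support w = Set.univ := by
    ext x; simpa [Function.support] using (hw.2.1 x).1.ne'
  refine ((lintegral_pos_iff_support hw.1).mpr ?_).ne'
  rw [hsupp, Measure.restrict_apply_univ]
  exact (cube_vol_ne_zero hQ).bot_lt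

lemma key_cube (u w : Rn n → ℝ≥0∞) (hu : IsWeight u) (hw : IsWeight w)
    (q r : ℝ) (hq : 1 < q) (hr : 1 < r) (hRH : RHinfConst w ≠ ∞)
    (Q : Set (Rn n)) (hQ : IsCube Q) :
    avgw (fun x => u x * w x) Q *
      (avgw (fun x => (u x * w x) ^ (1 - (q + r - 1) / (q + r - 1 - 1))) Q) ^ (q + r - 1 - 1)
      ≤ RHinfConst w * ApConst q u * ApConst r w := by
  set a : ℝ := q - 1 with ha_def
  set b : ℝ := r - 1 with hb_def
  have ha : 0 < a := by simp [ha_def]; linarith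
  have hb : 0 < b := by simp [hb_def]; linarith
  have hab : 0 < a + b := by linarith
  have hV0 : volume Q ≠ 0 := cube_vol_ne_zero hQ
  have hVT : volume Q ≠ ∞ := cube_vol_ne_top hQ
  have hW0 : wInt w Q ≠ 0 := wInt_ne_zero hw hQ
  have hWT : wInt w Q ≠ ∞ := hw.2.2 Q hQ
  set V : ℝ≥0∞ := volume Q with hV_def
  set C : ℝ≥0∞ := RHinfConst w with hC_def
  -- RH∞ estimate on essSup
  set S : ℝ≥0∞ := essSup w (volume.restrict Q) with hS_def
  have hRHQ : (V / wInt w Q) * S ≤ C := le_iSup₂ (f := fun (Q : Set (Rn n)) (_ : IsCube Q) =>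
    (volume Q / wInt w Q) * essSup w (volume.restrict Q)) Q hQ
  have hD0 : V / wInt w Q ≠ 0 :=
    (ENNReal.div_pos hV0 hWT).ne'
  have hDT : V / wInt w Q ≠ ∞ := (ENNReal.div_lt_top hVT hW0).ne
  have hS_le : S ≤ C * wInt w Q / V := by
    have h1 : S = (V / wInt w Q)⁻¹ * ((V / wInt w Q) * S) := by
      rw [← mul_assoc, ENNReal.inv_mul_cancel hD0 hDT, one_mul]
    rw [h1]
    calc (V / wInt w Q)⁻¹ * ((V / wInt w Q) * S) ≤ (V / wInt w Q)⁻¹ * C :=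
          mul_le_mul_right hRHQ _
      _ = C * wInt w Q / V := by
          rw [ENNReal.inv_div (Or.inl hWT) (Or.inl hW0)]
          simp only [div_eq_mul_inv]; ring
  have hST : S ≠ ∞ := by
    intro h
    apply hRH
    have : (V / wInt w Q) * S = ∞ := by rw [h]; exact ENNReal.mul_top hD0
    exact top_le_iff.mp (this ▸ hRHQ)
  -- first factor: wInt (u*w) Q ≤ S * wInt u Q
  have hUW : wInt (fun x => u x * w x) Q ≤ S * wInt u Q := by
    have hae : ∀ᵐ x ∂(volume.restrict Q), u x * w x ≤ S * u x := by
      filter_upwards [_root_.ae_le_essSup (f := w) (μ := volume.restrict Q)] with x hx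
      calc u x * w x ≤ u x * S := mul_le_mul_right hx _
        _ = S * u x := mul_comm _ _
    calc wInt (fun x => u x * w x) Q ≤ ∫⁻ x in Q, S * u x := lintegral_mono_ae hae
      _ = S * wInt u Q := lintegral_const_mul' S u hST
  -- exponent bookkeeping
  have hexp1 : q + r - 1 - 1 = a + b := by rw [ha_def, hb_def]; ring
  have hexp2 : 1 - (q + r - 1) / (q + r - 1 - 1) = -(1 / (a + b)) := by
    rw [hexp1]
    field_simp
    rw [ha_def, hb_def]; ring
  set e : ℝ := -(1 / (a + b)) with he_def
  set eu : ℝ := 1 - q / (q - 1) with heu_def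
  set ew : ℝ := 1 - r / (r - 1) with hew_def
  have heu : eu = -(1 / a) := by rw [heu_def, ha_def, one_sub_div (by linarith : q - 1 ≠ 0)]; ring
  have hew : ew = -(1 / b) := by rw [hew_def, hb_def, one_sub_div (by linarith : r - 1 ≠ 0)]; ring
  set p1 : ℝ := (a + b) / a with hp1_def
  set p2 : ℝ := (a + b) / b with hp2_def
  have hp : p1.HolderConjugate p2 := by
    rw [Real.holderConjugate_iff]
    constructor
    · rw [hp1_def]; rw [lt_div_iff₀ ha]; linarith
    · rw [hp1_def, hp2_def]; field_simp
  set X : ℝ≥0∞ := wInt (fun x => u x ^ eu) Q with hX_def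
  set Y : ℝ≥0∞ := wInt (fun x => w x ^ ew) Q with hY_def
  set Z : ℝ≥0∞ := wInt (fun x => (u x * w x) ^ e) Q with hZ_def
  -- Hölder
  have hZle : Z ≤ X ^ (1 / p1) * Y ^ (1 / p2) := by
    have hmu : AEMeasurable (fun x => u x ^ e) (volume.restrict Q) :=
      (hu.1.pow_const e).aemeasurable
    have hmw : AEMeasurable (fun x => w x ^ e) (volume.restrict Q) :=
      (hw.1.pow_const e).aemeasurable
    have hHold := ENNReal.lintegral_mul_le_Lp_mul_Lq (volume.restrict Q) hp hmu hmw
    simp only [Pi.mul_apply] at hHold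
    have hZeq : Z = ∫⁻ x in Q, u x ^ e * w x ^ e := by
      rw [hZ_def]; unfold wInt
      exact lintegral_congr fun x =>
        ENNReal.mul_rpow_of_ne_zero (hu.2.1 x).1.ne' (hw.2.1 x).1.ne' e
    have hXeq : (∫⁻ x in Q, (u x ^ e) ^ p1) = X := by
      rw [hX_def]; unfold wInt
      refine lintegral_congr fun x => ?_
      rw [← ENNReal.rpow_mul]; congr 1
      rw [he_def, heu, hp1_def]; field_simp
    have hYeq : (∫⁻ x in Q, (w x ^ e) ^ p2) = Y := by
      rw [hY_def]; unfold wInt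
      refine lintegral_congr fun x => ?_
      rw [← ENNReal.rpow_mul]; congr 1
      rw [he_def, hew, hp2_def]; field_simp
    rw [hZeq]
    rw [hXeq, hYeq] at hHold
    exact hHold
  -- average-level Hölder
  have hVa0 : V ^ a ≠ 0 := (ENNReal.rpow_pos hV0.bot_lt hVT).ne'
  have hVaT : V ^ a ≠ ∞ := ENNReal.rpow_ne_top_of_nonneg ha.le hVT
  have hVb0 : V ^ b ≠ 0 := (ENNReal.rpow_pos hV0.bot_lt hVT).ne'
  have havg : (avgw (fun x => (u x * w x) ^ e) Q) ^ (a + b) ≤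
      (avgw (fun x => u x ^ eu) Q) ^ a * (avgw (fun x => w x ^ ew) Q) ^ b := by
    rw [avgw, avgw, avgw, ← hX_def, ← hY_def, ← hZ_def, ← hV_def,
      ENNReal.div_rpow_of_nonneg _ _ hab.le, ENNReal.div_rpow_of_nonneg _ _ ha.le,
      ENNReal.div_rpow_of_nonneg _ _ hb.le]
    have hnum : Z ^ (a + b) ≤ X ^ a * Y ^ b := by
      calc Z ^ (a + b) ≤ (X ^ (1 / p1) * Y ^ (1 / p2)) ^ (a + b) :=
            ENNReal.rpow_le_rpow hZle hab.le
        _ = X ^ a * Y ^ b := by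
            rw [ENNReal.mul_rpow_of_nonneg _ _ hab.le, ← ENNReal.rpow_mul, ← ENNReal.rpow_mul]
            congr 1
            · congr 1
              rw [hp1_def]; field_simp
            · congr 1
              rw [hp2_def]; field_simp
    calc Z ^ (a + b) / V ^ (a + b) ≤ (X ^ a * Y ^ b) / V ^ (a + b) :=
          ENNReal.div_le_div_right hnum _
      _ = X ^ a / V ^ a * (Y ^ b / V ^ b) := by
          rw [ENNReal.rpow_add _ _ hV0 hVT]
          simp only [div_eq_mul_inv, ENNReal.mul_inv (Or.inl hVa0) (Or.inr hVb0)]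
          ring
  -- first factor bound
  have h1 : avgw (fun x => u x * w x) Q ≤ C * avgw u Q * avgw w Q := by
    rw [avgw, avgw, avgw, ← hV_def]
    calc wInt (fun x => u x * w x) Q / V ≤ S * wInt u Q / V :=
          ENNReal.div_le_div_right hUW _
      _ ≤ (C * wInt w Q / V) * wInt u Q / V :=
          ENNReal.div_le_div_right (mul_le_mul_left hS_le _) _
      _ = C * (wInt u Q / V) * (wInt w Q / V) := by
          simp only [div_eq_mul_inv]; ring
  -- per-cube Ap terms
  have hAqQ : avgw u Q * (avgw (fun x => u x ^ eu) Q) ^ a ≤ ApConst q u := by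
    rw [heu_def, ha_def]
    exact le_iSup₂ (f := fun (Q : Set (Rn n)) (_ : IsCube Q) =>
      avgw u Q * (avgw (fun x => u x ^ (1 - q / (q - 1))) Q) ^ (q - 1)) Q hQ
  have hArQ : avgw w Q * (avgw (fun x => w x ^ ew) Q) ^ b ≤ ApConst r w := by
    rw [hew_def, hb_def]
    exact le_iSup₂ (f := fun (Q : Set (Rn n)) (_ : IsCube Q) =>
      avgw w Q * (avgw (fun x => w x ^ (1 - r / (r - 1))) Q) ^ (r - 1)) Q hQ
  -- assemble
  simp only [hexp2]
  rw [hexp1]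
  calc avgw (fun x => u x * w x) Q * (avgw (fun x => (u x * w x) ^ e) Q) ^ (a + b)
      ≤ (C * avgw u Q * avgw w Q) *
        ((avgw (fun x => u x ^ eu) Q) ^ a * (avgw (fun x => w x ^ ew) Q) ^ b) :=
        mul_le_mul' h1 havg
    _ = (C * (avgw u Q * (avgw (fun x => u x ^ eu) Q) ^ a)) *
        (avgw w Q * (avgw (fun x => w x ^ ew) Q) ^ b) := by ring
    _ ≤ (C * ApConst q u) * ApConst r w :=
        mul_le_mul' (mul_le_mul_right hAqQ C) hArQ

/-- If `u ∈ A_q` and `w ∈ A_r ∩ RH_∞` (`q, r > 1`), then `uw ∈ A_{q+r-1}` with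
`[uw]_{A_{q+r-1}} ≤ [w]_{RH_∞}[u]_{A_q}[w]_{A_r}`. -/
theorem stmt3 {n : ℕ} (u w : Rn n → ℝ≥0∞) (hu : IsWeight u) (hw : IsWeight w)
    (q r : ℝ) (hq : 1 < q) (hr : 1 < r)
    (hAq : ApConst q u ≠ ∞) (hAr : ApConst r w ≠ ∞) (hRH : RHinfConst w ≠ ∞) :
    MemAp (q + r - 1) (fun x => u x * w x) ∧
      ApConst (q + r - 1) (fun x => u x * w x) ≤
        RHinfConst w * ApConst q u * ApConst r w := by
  have hs1 : (1 : ℝ) < q + r - 1 := by linarith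
  have hbound : ApConst (q + r - 1) (fun x => u x * w x) ≤
      RHinfConst w * ApConst q u * ApConst r w :=
    iSup₂_le fun Q hQ => key_cube u w hu hw q r hq hr hRH Q hQ
  refine ⟨?_, hbound⟩
  unfold MemAp
  rw [if_neg hs1.ne']
  exact ne_top_of_le_ne_top (ENNReal.mul_ne_top (ENNReal.mul_ne_top hRH hAq) hAr) hbound
end
end

section
/- Fix $p \geq 1$, $m \geq 1$, and $f_1, \dots, f_m \in L^1_{loc}(\mathbb{R}^n)$ with each $Mf_i$ finite a.e. and not identically zero. Let $v = \prod_{i=1}^m (Mf_i)^{-1}$. Then $v^p \in RH_\infty$ and $1 \leq [v^p]_{RH_\infty} \leq c_{m,n,p}$, where $c_{m,n,p} = \inf_{0<\delta<1} (c_n/(1-\delta))^{mp/\delta}$ and $c_n$ is the dimensional constant in the $A_1$ bound for $(Mf)^\delta$. -/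
open MeasureTheory Set ENNReal NNReal

noncomputable section

variable {n : ℕ}

namespace StmtAux

lemma cubeSet_eq_preimage (x : Rn n) (r : ℝ) :
    cubeSet x r = ((MeasurableEquiv.toLp 2 (Fin n → ℝ)).symm) ⁻¹'
      (Set.univ.pi fun i => Icc (x i) (x i + r)) := by
  ext y
  simp only [cubeSet, mem_setOf_eq, mem_preimage, Set.mem_pi, mem_univ, forall_true_left,
    mem_Icc]
  rfl

lemma volume_cubeSet (x : Rn n) (r : ℝ) (hr : 0 ≤ r) :
    volume (cubeSet x r) = ENNReal.ofReal r ^ n := by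
  rw [cubeSet_eq_preimage]
  rw [(EuclideanSpace.volume_preserving_symm_measurableEquiv_toLp (Fin n)).measure_preimage
    ((MeasurableSet.univ_pi fun i => measurableSet_Icc).nullMeasurableSet)]
  rw [volume_pi_pi]
  simp [Real.volume_Icc]

lemma measurableSet_cubeSet (x : Rn n) (r : ℝ) : MeasurableSet (cubeSet x r) := by
  rw [cubeSet_eq_preimage]
  exact ((MeasurableEquiv.toLp 2 (Fin n → ℝ)).symm).measurable
    (MeasurableSet.univ_pi fun i => measurableSet_Icc)

lemma cube_measurableSet {Q : Set (Rn n)} (hQ : IsCube Q) : MeasurableSet Q := by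
  obtain ⟨x, r, _, rfl⟩ := hQ; exact measurableSet_cubeSet x r

lemma cube_volume_pos {Q : Set (Rn n)} (hQ : IsCube Q) : 0 < volume Q := by
  obtain ⟨x, r, hr, rfl⟩ := hQ
  rw [volume_cubeSet x r hr.le]
  exact pos_iff_ne_zero.2 (pow_ne_zero _ (by simp [hr]))

lemma cube_volume_ne_top {Q : Set (Rn n)} (hQ : IsCube Q) : volume Q ≠ ∞ := by
  obtain ⟨x, r, hr, rfl⟩ := hQ
  rw [volume_cubeSet x r hr.le]
  exact (pow_lt_top ofReal_lt_top).ne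

lemma abs_sub_coord_le_dist (x y : Rn n) (i : Fin n) : |x i - y i| ≤ dist x y := by
  have h1 : dist (x i) (y i) ^ 2 ≤ ∑ j, dist (x j) (y j) ^ 2 :=
    Finset.single_le_sum (f := fun j => dist (x j) (y j) ^ 2)
      (fun j _ => sq_nonneg _) (Finset.mem_univ i)
  calc |x i - y i| = dist (x i) (y i) := (Real.dist_eq _ _).symm
    _ = Real.sqrt (dist (x i) (y i) ^ 2) := (Real.sqrt_sq dist_nonneg).symm
    _ ≤ Real.sqrt (∑ j, dist (x j) (y j) ^ 2) := Real.sqrt_le_sqrt h1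
    _ = dist x y := (EuclideanSpace.dist_eq x y).symm

lemma le_HLM {g : Rn n → ℝ≥0∞} {Q : Set (Rn n)} (hQ : IsCube Q) {x : Rn n} (hx : x ∈ Q) :
    (∫⁻ y in Q, g y) / volume Q ≤ HLM g x :=
  le_iSup_of_le Q <| le_iSup_of_le hQ <| le_iSup_of_le hx le_rfl

lemma measurable_HLM (g : Rn n → ℝ≥0∞) : Measurable (HLM g) := by
  have lsc : LowerSemicontinuous (HLM g) := by
    intro x y hy
    rw [HLM, gt_iff_lt, lt_iSup_iff] at hy
    obtain ⟨Q, hy⟩ := hy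
    rw [lt_iSup_iff] at hy
    obtain ⟨hQ, hy⟩ := hy
    rw [lt_iSup_iff] at hy
    obtain ⟨hxQ, hy⟩ := hy
    obtain ⟨z, r, hr, rfl⟩ := hQ
    set I : ℝ≥0∞ := ∫⁻ y in cubeSet z r, g y with hI
    have hy' : y < I / ENNReal.ofReal r ^ n := by
      rwa [volume_cubeSet z r hr.le] at hy
    have hV : Filter.Tendsto (fun ε : ℝ => I / ENNReal.ofReal (r + 2*ε) ^ n)
        (nhdsWithin 0 (Ioi 0)) (nhds (I / ENNReal.ofReal r ^ n)) := by
      have h1 : Continuous (fun ε : ℝ => (ENNReal.ofReal (r + 2*ε) ^ n : ℝ≥0∞)) :=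
        (ENNReal.continuous_pow n).comp (ENNReal.continuous_ofReal.comp (by continuity))
      have h2 : Filter.Tendsto (fun ε : ℝ => (ENNReal.ofReal (r + 2*ε) ^ n)⁻¹)
          (nhdsWithin 0 (Ioi 0)) (nhds ((ENNReal.ofReal r ^ n)⁻¹)) := by
        have := ((continuous_inv.comp h1).tendsto 0).mono_left
          (nhdsWithin_le_nhds (s := Ioi (0:ℝ)))
        simpa only [Function.comp_def, mul_zero, add_zero] using this
      have h3 := ENNReal.Tendsto.const_mul (a := I) h2
        (Or.inl (by simp [ENNReal.inv_ne_zero] : ((ENNReal.ofReal r ^ n)⁻¹) ≠ 0))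
      simpa [div_eq_mul_inv] using h3
    obtain ⟨ε, hyε, hε⟩ :=
      ((hV.eventually (eventually_gt_nhds hy')).and eventually_mem_nhdsWithin).exists
    rw [mem_Ioi] at hε
    have hcube : IsCube (cubeSet (WithLp.toLp 2 (fun i => z i - ε) : Rn n) (r + 2*ε)) :=
      ⟨_, r + 2*ε, by linarith, rfl⟩
    filter_upwards [Metric.ball_mem_nhds x hε] with x' hx'
    have hd' : dist x' x < ε := by rwa [Metric.mem_ball] at hx'
    have hx'Q : x' ∈ cubeSet (WithLp.toLp 2 (fun i => z i - ε) : Rn n) (r + 2*ε) := by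
      intro i
      have hd : |x' i - x i| ≤ ε := (abs_sub_coord_le_dist x' x i).trans hd'.le
      obtain ⟨hd1, hd2⟩ := abs_le.mp hd
      have h1 := (hxQ i).1; have h2 := (hxQ i).2
      exact ⟨by dsimp only; linarith, by dsimp only; linarith⟩
    have hsub : cubeSet z r ⊆ cubeSet (WithLp.toLp 2 (fun i => z i - ε) : Rn n) (r + 2*ε) := by
      intro q hq i
      have h1 := (hq i).1; have h2 := (hq i).2
      exact ⟨by dsimp only; linarith, by dsimp only; linarith⟩
    calc y < I / ENNReal.ofReal (r + 2*ε) ^ n := hyε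
      _ ≤ (∫⁻ y in cubeSet (WithLp.toLp 2 (fun i => z i - ε) : Rn n) (r + 2*ε), g y) /
            volume (cubeSet (WithLp.toLp 2 (fun i => z i - ε) : Rn n) (r + 2*ε)) := by
          rw [volume_cubeSet _ _ (by linarith : (0:ℝ) ≤ r + 2*ε)]
          exact ENNReal.div_le_div_right
            (lintegral_mono' (Measure.restrict_mono hsub le_rfl) le_rfl) _
      _ ≤ HLM g x' := le_HLM hcube hx'Q
  exact lsc.measurable

lemma exists_cube_superset {Q₁ Q₂ : Set (Rn n)} (h₁ : IsCube Q₁) (h₂ : IsCube Q₂) :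
    ∃ Q, IsCube Q ∧ Q₁ ⊆ Q ∧ Q₂ ⊆ Q := by
  obtain ⟨z₁, r₁, hr₁, rfl⟩ := h₁
  obtain ⟨z₂, r₂, hr₂, rfl⟩ := h₂
  have hd0 : 0 ≤ ∑ i, |z₁ i - z₂ i| := Finset.sum_nonneg fun i _ => abs_nonneg _
  set d : ℝ := ∑ i, |z₁ i - z₂ i| with hdd
  set R : ℝ := r₁ + r₂ + d + 1 with hR
  have habs : ∀ i, |z₁ i - z₂ i| ≤ d := fun i =>
    Finset.single_le_sum (f := fun j => |z₁ j - z₂ j|)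
      (fun j _ => abs_nonneg _) (Finset.mem_univ i)
  refine ⟨cubeSet (WithLp.toLp 2 (fun i => min (z₁ i) (z₂ i)) : Rn n) R,
    ⟨_, R, by linarith, rfl⟩, ?_, ?_⟩
  · intro y hy i
    have h1 := (hy i).1; have h2 := (hy i).2
    have ha := habs i
    have hb := abs_le.mp (le_refl |z₁ i - z₂ i|) |>.1
    constructor
    · dsimp only; exact le_trans (min_le_left _ _) h1
    · dsimp only
      rcases le_total (z₁ i) (z₂ i) with h | h
      · rw [min_eq_left h]; linarith
      · rw [min_eq_right h]
        have : z₁ i - z₂ i ≤ |z₁ i - z₂ i| := le_abs_self _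
        linarith
  · intro y hy i
    have h1 := (hy i).1; have h2 := (hy i).2
    have ha := habs i
    constructor
    · dsimp only; exact le_trans (min_le_right _ _) h1
    · dsimp only
      rcases le_total (z₁ i) (z₂ i) with h | h
      · rw [min_eq_left h]
        have : z₂ i - z₁ i ≤ |z₁ i - z₂ i| := by
          rw [abs_sub_comm]; exact le_abs_self _
        linarith
      · rw [min_eq_right h]; linarith

lemma exists_cube_pos_integral {g : Rn n → ℝ≥0∞} (hg : Measurable g)
    (hnz : ¬ g =ᵐ[(volume : Measure (Rn n))] 0) :
    ∃ Q : Set (Rn n), IsCube Q ∧ 0 < ∫⁻ y in Q, g y := by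
  by_contra h
  push_neg at h
  apply hnz
  have hcube : ∀ k : ℕ,
      volume ({x | g x ≠ 0} ∩ cubeSet (WithLp.toLp 2 (fun _ => -(k:ℝ)) : Rn n) (2*k+1)) = 0 := by
    intro k
    have h0 : (∫⁻ y in cubeSet (WithLp.toLp 2 (fun _ => -(k:ℝ)) : Rn n) (2*k+1), g y) = 0 :=
      le_antisymm (h _ ⟨_, _, by positivity, rfl⟩) zero_le
    have := (lintegral_eq_zero_iff hg).mp h0
    rw [Filter.EventuallyEq, ae_iff] at this
    rw [Measure.restrict_apply₀' (measurableSet_cubeSet _ _).nullMeasurableSet] at this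
    simpa using this
  have hU : {x : Rn n | g x ≠ 0} ⊆
      ⋃ k : ℕ, ({x | g x ≠ 0} ∩ cubeSet (WithLp.toLp 2 (fun _ => -(k:ℝ)) : Rn n) (2*k+1)) := by
    intro x hx
    obtain ⟨k, hk⟩ := exists_nat_ge (∑ i, |x i|)
    refine mem_iUnion.2 ⟨k, hx, fun i => ?_⟩
    have habs : |x i| ≤ (k:ℝ) :=
      le_trans (Finset.single_le_sum (f := fun j => |x j|)
        (fun j _ => abs_nonneg _) (Finset.mem_univ i)) hk
    obtain ⟨ha, hb⟩ := abs_le.mp habs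
    exact ⟨by dsimp only; linarith, by dsimp only; push_cast; linarith⟩
  have hz : volume {x : Rn n | g x ≠ 0} = 0 :=
    measure_mono_null hU (measure_iUnion_null hcube)
  rw [Filter.EventuallyEq, ae_iff]
  simpa using hz

lemma HLM_pos_on {g : Rn n → ℝ≥0∞} (hg : Measurable g)
    (hnz : ¬ g =ᵐ[(volume : Measure (Rn n))] 0) {Q : Set (Rn n)} (hQ : IsCube Q) :
    ∃ c : ℝ≥0∞, 0 < c ∧ c ≠ ∞ ∧ ∀ x ∈ Q, c ≤ HLM g x := by
  obtain ⟨Q₁, hQ₁, hpos⟩ := exists_cube_pos_integral hg hnz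
  obtain ⟨Qb, hQb, hsub₁, hsub₂⟩ := exists_cube_superset hQ₁ hQ
  refine ⟨min ((∫⁻ y in Q₁, g y) / volume Qb) 1, ?_, ?_, ?_⟩
  · exact lt_min (ENNReal.div_pos hpos.ne' (cube_volume_ne_top hQb)) one_pos
  · exact ne_top_of_le_ne_top one_ne_top (min_le_right _ _)
  · intro x hx
    refine le_trans (min_le_left _ _) (le_trans ?_ (le_HLM hQb (hsub₂ hx)))
    exact ENNReal.div_le_div_right
      (lintegral_mono' (Measure.restrict_mono hsub₁ le_rfl) le_rfl) _

lemma HLM_pos {g : Rn n → ℝ≥0∞} (hg : Measurable g)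
    (hnz : ¬ g =ᵐ[(volume : Measure (Rn n))] 0) (x : Rn n) : 0 < HLM g x := by
  have hx : x ∈ cubeSet x 1 := fun i => ⟨le_refl _, by linarith⟩
  obtain ⟨c, hc, -, h⟩ := HLM_pos_on hg hnz ⟨x, 1, one_pos, rfl⟩
  exact hc.trans_le (h x hx)

end StmtAux

/-- For `v = ∏ (Mf_i)⁻¹` one has `v^p ∈ RH_∞` with
`1 ≤ [v^p]_{RH_∞} ≤ inf_{0<δ<1} (c_n/(1-δ))^{mp/δ}`, where `c_n` is the dimensional
constant from the Coifman–Rochberg `A_1` bound for `(Mg)^δ`. -/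
theorem stmt4 {n : ℕ} (m : ℕ) (hm : 1 ≤ m) (p : ℝ) (hp : 1 ≤ p) (Cn : ℝ≥0∞)
    (hCn : ∀ g : Rn n → ℝ≥0∞, Measurable g → ∀ δ : ℝ, 0 < δ → δ < 1 →
      A1Const (fun x => HLM g x ^ δ) ≤ Cn / ENNReal.ofReal (1 - δ))
    (f : Fin m → Rn n → ℝ≥0∞) (hf : ∀ i, Measurable (f i))
    (hloc : ∀ i, ∀ Q : Set (Rn n), IsCube Q → (∫⁻ y in Q, f i y) ≠ ∞)
    (hfin : ∀ i, ∀ᵐ x ∂(volume : Measure (Rn n)), HLM (f i) x ≠ ∞)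
    (hnz : ∀ i, ¬ (f i =ᵐ[(volume : Measure (Rn n))] 0)) :
    1 ≤ RHinfConst (fun x => (∏ i, (HLM (f i) x)⁻¹) ^ p) ∧
      RHinfConst (fun x => (∏ i, (HLM (f i) x)⁻¹) ^ p) ≤
        ⨅ (δ : ℝ) (_ : 0 < δ) (_ : δ < 1),
          (Cn / ENNReal.ofReal (1 - δ)) ^ (m * p / δ) := by
  classical
  have hp0 : (0:ℝ) < p := lt_of_lt_of_le one_pos hp
  have hm' : (0:ℝ) < m := by exact_mod_cast Nat.lt_of_lt_of_le Nat.zero_lt_one hm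
  set w : Rn n → ℝ≥0∞ := fun x => (∏ i, (HLM (f i) x)⁻¹) ^ p with hw
  have hMpos : ∀ (i : Fin m) x, 0 < HLM (f i) x := fun i x => StmtAux.HLM_pos (hf i) (hnz i) x
  have hfin' : ∀ᵐ x ∂(volume : Measure (Rn n)), ∀ i, HLM (f i) x ≠ ∞ := ae_all_iff.2 hfin
  have hrpow_pos : ∀ (z : ℝ≥0∞) (s : ℝ), 0 < z → 0 < s → 0 < z ^ s := by
    intro z s hz hs
    rcases eq_or_ne z ∞ with rfl | hne
    · rw [ENNReal.top_rpow_of_pos hs]; exact lt_of_lt_of_le zero_lt_one le_top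
    · exact ENNReal.rpow_pos hz hne
  have hwpos : ∀ᵐ x ∂(volume : Measure (Rn n)), 0 < w x := by
    filter_upwards [hfin'] with x hx
    have h2 : ∏ i, (HLM (f i) x)⁻¹ ≠ ∞ :=
      (ENNReal.prod_lt_top fun i _ => ENNReal.inv_lt_top.2 (hMpos i x)).ne
    exact ENNReal.rpow_pos
      (CanonicallyOrderedAdd.prod_pos.2 fun i _ => ENNReal.inv_pos.2 (hx i)) h2
  have hbound : ∀ Q : Set (Rn n), IsCube Q → ∃ K : ℝ≥0∞, K ≠ ∞ ∧ ∀ x ∈ Q, w x ≤ K := by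
    intro Q hQ
    choose c hc0 hctop hcQ using fun i : Fin m => StmtAux.HLM_pos_on (hf i) (hnz i) hQ
    refine ⟨(∏ i, (c i)⁻¹) ^ p, ?_, ?_⟩
    · exact ENNReal.rpow_ne_top_of_nonneg hp0.le
        (ENNReal.prod_lt_top fun i _ => ENNReal.inv_lt_top.2 (hc0 i)).ne
    · intro x hx
      refine ENNReal.rpow_le_rpow (Finset.prod_le_prod' fun i _ => ?_) hp0.le
      exact ENNReal.inv_le_inv' (hcQ i x hx)
  constructor
  · -- part 1
    have hQ₀ : IsCube (cubeSet (0 : Rn n) 1) := ⟨0, 1, one_pos, rfl⟩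
    set Q₀ : Set (Rn n) := cubeSet 0 1 with hQ₀def
    have hvol : volume Q₀ = 1 := by
      rw [hQ₀def, StmtAux.volume_cubeSet _ _ zero_le_one]; simp
    obtain ⟨K, hKtop, hK⟩ := hbound Q₀ hQ₀
    have hle : wInt w Q₀ ≤ K * volume Q₀ := by
      calc wInt w Q₀ ≤ ∫⁻ _x in Q₀, K := lintegral_mono_ae
            ((ae_restrict_iff' (StmtAux.measurableSet_cubeSet _ _)).2
              (Filter.Eventually.of_forall hK))
        _ = K * volume Q₀ := setLIntegral_const Q₀ K
    have hI : wInt w Q₀ ≠ ∞ :=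
      ne_top_of_le_ne_top (ENNReal.mul_ne_top hKtop (hvol ▸ one_ne_top)) hle
    have hres0 : volume.restrict Q₀ ≠ 0 := by
      intro h0
      have h1 := congrArg (fun μ : Measure (Rn n) => μ univ) h0
      simp only [Measure.restrict_apply_univ, Measure.coe_zero, Pi.zero_apply] at h1
      rw [hvol] at h1
      exact one_ne_zero h1
    have hS : essSup w (volume.restrict Q₀) ≠ 0 := by
      intro h0
      have h1 : w =ᵐ[volume.restrict Q₀] 0 := essSup_eq_zero_iff.mp h0
      have h2 : ∀ᵐ x ∂volume.restrict Q₀, 0 < w x := ae_restrict_of_ae hwpos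
      have hne : (ae (volume.restrict Q₀)).NeBot := ae_neBot.2 hres0
      obtain ⟨x, hx1, hx2⟩ := (h1.and h2).exists
      rw [hx1] at hx2
      simp at hx2
    have hles : wInt w Q₀ ≤ volume Q₀ * essSup w (volume.restrict Q₀) := by
      calc wInt w Q₀ ≤ ∫⁻ _x in Q₀, essSup w (volume.restrict Q₀) :=
            lintegral_mono_ae (ae_le_essSup w)
        _ = _ := by rw [setLIntegral_const, mul_comm]
    refine le_trans ?_ (le_iSup_of_le Q₀ (le_iSup_of_le hQ₀ le_rfl))
    rcases eq_or_ne (wInt w Q₀) 0 with h0 | h0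
    · rw [h0, ENNReal.div_zero (by rw [hvol]; exact one_ne_zero), ENNReal.top_mul hS]
      exact le_top
    · rw [div_eq_mul_inv, mul_right_comm, ← div_eq_mul_inv,
        ENNReal.le_div_iff_mul_le (Or.inl h0) (Or.inl hI), one_mul]
      exact hles
  · -- part 2
    refine le_iInf fun δ => le_iInf fun hδ0 => le_iInf fun hδ1 => ?_
    set D : ℝ≥0∞ := Cn / ENNReal.ofReal (1 - δ) with hD
    have hexp : (0:ℝ) < (m:ℝ) * p / δ := div_pos (mul_pos hm' hp0) hδ0
    by_cases hCtop : Cn = ∞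
    · rw [hD, hCtop, ENNReal.top_div_of_ne_top ofReal_ne_top, ENNReal.top_rpow_of_pos hexp]
      exact le_top
    refine iSup_le fun Q => iSup_le fun hQ => ?_
    have hQvol0 : volume Q ≠ 0 := (StmtAux.cube_volume_pos hQ).ne'
    have hQvolt : volume Q ≠ ∞ := StmtAux.cube_volume_ne_top hQ
    have hQm : MeasurableSet Q := StmtAux.cube_measurableSet hQ
    set u : Fin m → Rn n → ℝ≥0∞ := fun i x => HLM (f i) x ^ δ with hu
    set e : Fin m → ℝ≥0∞ := fun i => essInf (u i) (volume.restrict Q) with he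
    set a : Fin m → ℝ≥0∞ := fun i => avgw (u i) Q with ha
    have hres0 : volume.restrict Q ≠ 0 := by
      intro h0
      have h1 := congrArg (fun μ : Measure (Rn n) => μ univ) h0
      simp only [Measure.restrict_apply_univ, Measure.coe_zero, Pi.zero_apply] at h1
      exact hQvol0 h1
    have hA1 : ∀ i, a i * (e i)⁻¹ ≤ D := by
      intro i
      have h2 : avgw (u i) Q * (essInf (u i) (volume.restrict Q))⁻¹ ≤ A1Const (u i) :=
        le_iSup_of_le Q (le_iSup_of_le hQ le_rfl)
      exact le_trans h2 (hCn (f i) (hf i) δ hδ0 hδ1)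
    choose c hc0 hctop hcQ using fun i : Fin m => StmtAux.HLM_pos_on (hf i) (hnz i) hQ
    have hue : ∀ i, ∀ᵐ x ∂volume.restrict Q, e i ≤ u i x := fun i => ae_essInf_le
    have he0 : ∀ i, 0 < e i := by
      intro i
      have h1 : (c i) ^ δ ≤ e i := by
        refine le_essInf_of_ae_le _ ?_
        refine (ae_restrict_iff' hQm).2 (Filter.Eventually.of_forall fun x hx => ?_)
        exact ENNReal.rpow_le_rpow (hcQ i x hx) hδ0.le
      exact lt_of_lt_of_le (ENNReal.rpow_pos (hc0 i) (hctop i)) h1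
    have hetop : ∀ i, e i ≠ ∞ := by
      intro i
      have h2 : ∀ᵐ x ∂volume.restrict Q, u i x ≠ ∞ :=
        ae_restrict_of_ae ((hfin i).mono fun x hx =>
          ENNReal.rpow_ne_top_of_nonneg hδ0.le hx)
      have hne : (ae (volume.restrict Q)).NeBot := ae_neBot.2 hres0
      obtain ⟨x, hx1, hx2⟩ := ((hue i).and h2).exists
      intro htop
      rw [htop] at hx1
      exact hx2 (top_le_iff.mp hx1)
    have hea : ∀ i, e i ≤ a i := by
      intro i
      have h1 : e i * volume Q ≤ wInt (u i) Q := by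
        calc e i * volume Q = ∫⁻ _x in Q, e i := (setLIntegral_const Q (e i)).symm
          _ ≤ ∫⁻ x in Q, u i x := lintegral_mono_ae (hue i)
      calc e i = e i * volume Q / volume Q := by
            rw [mul_div_assoc, ENNReal.div_self hQvol0 hQvolt, mul_one]
        _ ≤ a i := ENNReal.div_le_div_right h1 _
    have hof0 : ENNReal.ofReal (1 - δ) ≠ 0 := by
      rw [Ne, ENNReal.ofReal_eq_zero]; push_neg; linarith
    have hDtop : D ≠ ∞ := (ENNReal.div_lt_top hCtop hof0).ne
    have haD : ∀ i, a i ≤ D * e i := by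
      intro i
      calc a i = a i * (e i)⁻¹ * e i := by
            rw [mul_assoc, ENNReal.inv_mul_cancel (he0 i).ne' (hetop i), mul_one]
        _ ≤ D * e i := mul_le_mul_left (hA1 i) _
    have ha0 : ∀ i, a i ≠ 0 := fun i => ((he0 i).trans_le (hea i)).ne'
    have hatop : ∀ i, a i ≠ ∞ := fun i =>
      (lt_of_le_of_lt (haD i) (ENNReal.mul_lt_top hDtop.lt_top (hetop i).lt_top)).ne
    have hD0 : D ≠ 0 := by
      intro h0
      exact ha0 ⟨0, hm⟩ (le_antisymm (by simpa [h0] using haD ⟨0, hm⟩) zero_le)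
    have hei_inv : ∀ i, (e i)⁻¹ ≤ D * (a i)⁻¹ := by
      intro i
      have h := ENNReal.inv_le_inv.2 (haD i)
      rw [ENNReal.mul_inv (Or.inl hD0) (Or.inl hDtop)] at h
      calc (e i)⁻¹ = D * (D⁻¹ * (e i)⁻¹) := by
            rw [← mul_assoc, ENNReal.mul_inv_cancel hD0 hDtop, one_mul]
        _ ≤ D * (a i)⁻¹ := mul_le_mul_right h _
    have hess : essSup w (volume.restrict Q) ≤ ∏ i, ((e i)⁻¹) ^ (p/δ) := by
      refine essSup_le_of_ae_le _ ?_
      have hae : ∀ᵐ x ∂volume.restrict Q, ∀ i, e i ≤ u i x := ae_all_iff.2 hue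
      filter_upwards [hae] with x hx
      have h1 : ∀ i, (HLM (f i) x)⁻¹ ≤ ((e i)⁻¹) ^ (1/δ) := by
        intro i
        have h4 : e i ≤ HLM (f i) x ^ δ := hx i
        have h3 := ENNReal.rpow_le_rpow h4 (by positivity : (0:ℝ) ≤ 1/δ)
        rw [← ENNReal.rpow_mul, mul_one_div, div_self hδ0.ne', ENNReal.rpow_one] at h3
        calc (HLM (f i) x)⁻¹ ≤ ((e i) ^ (1/δ))⁻¹ := ENNReal.inv_le_inv.2 h3
          _ = ((e i)⁻¹) ^ (1/δ) := (ENNReal.inv_rpow _ _).symm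
      calc w x ≤ (∏ i, ((e i)⁻¹) ^ (1/δ)) ^ p :=
            ENNReal.rpow_le_rpow (Finset.prod_le_prod' fun i _ => h1 i) hp0.le
        _ = ∏ i, ((e i)⁻¹) ^ (p/δ) := by
            rw [ENNReal.prod_rpow_of_nonneg (by positivity : (0:ℝ) ≤ 1/δ), ← ENNReal.rpow_mul]
            rw [show 1/δ * p = p/δ by field_simp]
            exact (ENNReal.prod_rpow_of_nonneg (by positivity : (0:ℝ) ≤ p/δ)).symm
    have hessD : essSup w (volume.restrict Q) ≤ ∏ i, (D * (a i)⁻¹) ^ (p/δ) :=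
      hess.trans (Finset.prod_le_prod' fun i _ =>
        ENNReal.rpow_le_rpow (hei_inv i) (by positivity : (0:ℝ) ≤ p/δ))
    -- Claim B via Hölder
    set μ : Measure (Rn n) := (volume Q)⁻¹ • volume.restrict Q with hμ
    have hprob : IsProbabilityMeasure μ := ⟨by
      rw [hμ, Measure.smul_apply, Measure.restrict_apply_univ, smul_eq_mul,
        ENNReal.inv_mul_cancel hQvol0 hQvolt]⟩
    have hμint : ∀ g : Rn n → ℝ≥0∞, ∫⁻ x, g x ∂μ = (volume Q)⁻¹ * ∫⁻ x in Q, g x := by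
      intro g; rw [hμ, lintegral_smul_measure, smul_eq_mul]
    have ha' : ∀ i, ∫⁻ x, u i x ∂μ = a i := by
      intro i
      rw [hμint]
      exact (ENNReal.div_eq_inv_mul).symm
    have hmeasu : ∀ i, Measurable (u i) := fun i => (StmtAux.measurable_HLM (f i)).pow_const δ
    set h : Rn n → ℝ≥0∞ := fun x => ∏ i, u i x with hh
    have hmeas_h : Measurable h := Finset.measurable_prod _ fun i _ => hmeasu i
    have hh0 : ∀ x, h x ≠ 0 := fun x =>
      (CanonicallyOrderedAdd.prod_pos.2 fun i _ =>
        hrpow_pos _ _ (hMpos i x) hδ0).ne'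
    have hhfin : ∀ᵐ x ∂μ, h x ≠ ∞ := by
      have h1 : ∀ᵐ x ∂(volume : Measure (Rn n)), h x ≠ ∞ := by
        filter_upwards [hfin'] with x hx
        exact (ENNReal.prod_lt_top fun i _ =>
          (ENNReal.rpow_ne_top_of_nonneg hδ0.le (hx i)).lt_top).ne
      rw [hμ]
      exact Measure.ae_smul_measure (ae_restrict_of_ae h1) _
    have hweq : ∀ x, w x = h x ^ (-(p/δ)) := by
      intro x
      have h1 : h x = (∏ i, HLM (f i) x) ^ δ := ENNReal.prod_rpow_of_nonneg hδ0.le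
      rw [h1, ← ENNReal.rpow_mul, show δ * -(p/δ) = -p by field_simp, ENNReal.rpow_neg,
        ← ENNReal.inv_rpow]
      simp only [hw]
      congr 2
      exact (ENNReal.prod_inv_distrib fun i _ j _ _ => Or.inl (hMpos i x).ne').symm
    set r : ℝ := p / δ with hrdef
    have hr1 : 0 < r := div_pos hp0 hδ0
    set t : ℝ := r * m with ht
    have ht0 : 0 < t := mul_pos hr1 hm'
    have h1t : (0:ℝ) < 1 + t := by linarith
    set P : ℝ := (1 + t) / t with hP
    set P' : ℝ := 1 + t with hP'
    have hP0 : 0 < P := div_pos h1t ht0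
    have hP'0 : 0 < P' := h1t
    have hconj : Real.HolderConjugate P P' := by
      rw [Real.holderConjugate_iff]
      constructor
      · rw [hP, lt_div_iff₀ ht0]; linarith
      · rw [hP, hP']; field_simp; ring
    set a₀ : ℝ := 1 / ((m:ℝ) * P) with ha₀
    have ha₀0 : 0 < a₀ := by positivity
    have hFm : AEMeasurable (fun x => h x ^ a₀) μ := (hmeas_h.pow_const a₀).aemeasurable
    have hGm : AEMeasurable (fun x => h x ^ (-a₀)) μ := (hmeas_h.pow_const (-a₀)).aemeasurable
    have hHold := ENNReal.lintegral_mul_le_Lp_mul_Lq μ hconj hFm hGm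
    simp only [Pi.mul_apply] at hHold
    have hFG : ∫⁻ x, (h x ^ a₀) * (h x ^ (-a₀)) ∂μ = 1 := by
      have hae : ∀ᵐ x ∂μ, (h x ^ a₀) * (h x ^ (-a₀)) = 1 := by
        filter_upwards [hhfin] with x hx
        rw [← ENNReal.rpow_add _ _ (hh0 x) hx]
        simp
      rw [lintegral_congr_ae hae, lintegral_one, measure_univ]
    rw [hFG] at hHold
    have hXeq : (∫⁻ x, (h x ^ a₀) ^ P ∂μ) = ∫⁻ x, ∏ i, u i x ^ (1/(m:ℝ)) ∂μ := by
      refine lintegral_congr fun x => ?_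
      rw [← ENNReal.rpow_mul, show a₀ * P = 1/(m:ℝ) by
        rw [ha₀]; field_simp]
      exact (ENNReal.prod_rpow_of_nonneg (by positivity : (0:ℝ) ≤ 1/(m:ℝ))).symm
    set A : ℝ≥0∞ := ∏ i, a i with hA
    have hA0 : A ≠ 0 := Finset.prod_ne_zero_iff.2 fun i _ => ha0 i
    have hAtop : A ≠ ∞ := (ENNReal.prod_lt_top fun i _ => (hatop i).lt_top).ne
    have hX : (∫⁻ x, (h x ^ a₀) ^ P ∂μ) ≤ A ^ (1/(m:ℝ)) := by
      rw [hXeq]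
      calc ∫⁻ x, ∏ i, u i x ^ (1/(m:ℝ)) ∂μ ≤ ∏ i, (∫⁻ x, u i x ∂μ) ^ (1/(m:ℝ)) :=
            ENNReal.lintegral_prod_norm_pow_le Finset.univ
              (fun i _ => (hmeasu i).aemeasurable)
              (by rw [Finset.sum_const, Finset.card_univ, Fintype.card_fin, nsmul_eq_mul]
                  field_simp)
              (fun i _ => by positivity)
        _ = ∏ i, (a i) ^ (1/(m:ℝ)) := Finset.prod_congr rfl fun i _ => by rw [ha' i]
        _ = A ^ (1/(m:ℝ)) := ENNReal.prod_rpow_of_nonneg (by positivity)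
    have hYeq : (∫⁻ x, (h x ^ (-a₀)) ^ P' ∂μ) = ∫⁻ x, w x ∂μ := by
      refine lintegral_congr fun x => ?_
      rw [← ENNReal.rpow_mul, hweq x]
      congr 1
      rw [ha₀, hP, hP', ht, hrdef]
      have hδ' : δ ≠ 0 := hδ0.ne'
      have hm'' : (m:ℝ) ≠ 0 := hm'.ne'
      field_simp
    rw [hYeq] at hHold
    set Z : ℝ≥0∞ := A ^ (1/((m:ℝ)*P)) with hZ
    have hZ0 : Z ≠ 0 := (ENNReal.rpow_pos (pos_iff_ne_zero.2 hA0) hAtop).ne'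
    have hZtop : Z ≠ ∞ := ENNReal.rpow_ne_top_of_nonneg (by positivity) hAtop
    have hXZ : (∫⁻ x, (h x ^ a₀) ^ P ∂μ) ^ (1/P) ≤ Z := by
      rw [hZ]
      calc (∫⁻ x, (h x ^ a₀) ^ P ∂μ) ^ (1/P) ≤ (A ^ (1/(m:ℝ))) ^ (1/P) :=
            ENNReal.rpow_le_rpow hX (by positivity)
        _ = A ^ (1/((m:ℝ)*P)) := by
            rw [← ENNReal.rpow_mul]
            congr 1
            field_simp
    have hY1 : Z⁻¹ ≤ (∫⁻ x, w x ∂μ) ^ (1/P') := by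
      have h1 : 1 ≤ Z * (∫⁻ x, w x ∂μ) ^ (1/P') :=
        hHold.trans (mul_le_mul' hXZ le_rfl)
      calc Z⁻¹ = Z⁻¹ * 1 := (mul_one _).symm
        _ ≤ Z⁻¹ * (Z * (∫⁻ x, w x ∂μ) ^ (1/P')) := mul_le_mul_right h1 _
        _ = _ := by rw [← mul_assoc, ENNReal.inv_mul_cancel hZ0 hZtop, one_mul]
    have hY : (A ^ r)⁻¹ ≤ ∫⁻ x, w x ∂μ := by
      have h2 := ENNReal.rpow_le_rpow hY1 hP'0.le
      rw [← ENNReal.rpow_mul, one_div_mul_cancel hP'0.ne', ENNReal.rpow_one] at h2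
      refine le_trans (le_of_eq ?_) h2
      rw [hZ, ← ENNReal.inv_rpow, ← ENNReal.inv_rpow, ← ENNReal.rpow_mul]
      congr 1
      rw [hP, hP', ht]
      have hm'' : (m:ℝ) ≠ 0 := hm'.ne'
      field_simp
    have hwIntQ : volume Q * (A ^ r)⁻¹ ≤ wInt w Q := by
      have h1 : wInt w Q = volume Q * ∫⁻ x, w x ∂μ := by
        rw [hμint w, ← mul_assoc, ENNReal.mul_inv_cancel hQvol0 hQvolt, one_mul]
        rfl
      rw [h1]
      exact mul_le_mul_right hY _
    have hdiv : volume Q / wInt w Q ≤ A ^ r := by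
      calc volume Q / wInt w Q ≤ volume Q / (volume Q * (A ^ r)⁻¹) :=
            ENNReal.div_le_div_left hwIntQ _
        _ = A ^ r := by
            rw [show volume Q / (volume Q * (A ^ r)⁻¹)
                = volume Q * 1 / (volume Q * (A ^ r)⁻¹) by rw [mul_one],
              ENNReal.mul_div_mul_left 1 _ hQvol0 hQvolt, one_div, inv_inv]
    calc volume Q / wInt w Q * essSup w (volume.restrict Q)
        ≤ A ^ r * ∏ i, (D * (a i)⁻¹) ^ r := mul_le_mul' hdiv hessD
      _ = ∏ i, ((a i) ^ r * (D * (a i)⁻¹) ^ r) := by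
          rw [hA, ← ENNReal.prod_rpow_of_nonneg hr1.le, ← Finset.prod_mul_distrib]
      _ = ∏ _i : Fin m, D ^ r := Finset.prod_congr rfl fun i _ => by
          rw [← ENNReal.mul_rpow_of_nonneg _ _ hr1.le]
          congr 1
          rw [← mul_assoc, mul_comm (a i) D, mul_assoc,
            ENNReal.mul_inv_cancel (ha0 i) (hatop i), mul_one]
      _ = (D ^ r) ^ (m : ℕ) := by rw [Finset.prod_const, Finset.card_univ, Fintype.card_fin]
      _ = D ^ ((m:ℝ) * p / δ) := by
          rw [← ENNReal.rpow_natCast (D ^ r) m, ← ENNReal.rpow_mul, hrdef]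
          congr 1
          field_simp
end
end

section
/- Let $p \geq 1$ and let $w$ be a weight on $\mathbb{R}^n$. Then $[w]_{A_p^{\mathcal{R}}} \leq \|w\|_{A_p^{\mathcal{R}}} \leq p\,[w]_{A_p^{\mathcal{R}}}$. -/
open MeasureTheory Set ENNReal NNReal

noncomputable section

variable {n : ℕ}

section Helpers

open MeasureTheory Set ENNReal NNReal

variable {n : ℕ}

lemma ennreal_eq_biSup (x : ℝ≥0∞) :
    x = ⨆ (c : ℝ≥0) (_ : (c : ℝ≥0∞) < x), (c : ℝ≥0∞) := by
  refine le_antisymm ?_ (iSup₂_le fun c hc => hc.le)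
  refine ENNReal.le_of_forall_nnreal_lt fun r hr => ?_
  exact le_iSup₂ (f := fun (c : ℝ≥0) (_ : (c : ℝ≥0∞) < x) => (c : ℝ≥0∞)) r hr

lemma ennreal_mul_le_of_forall_lt {x k R : ℝ≥0∞}
    (h : ∀ c : ℝ≥0, (c : ℝ≥0∞) < x → (c : ℝ≥0∞) * k ≤ R) : x * k ≤ R := by
  rw [ennreal_eq_biSup x, ENNReal.iSup_mul]
  refine iSup_le fun c => ?_
  rw [ENNReal.iSup_mul]
  exact iSup_le fun hc => h c hc

lemma cube_measurableSet {Q : Set (Rn n)} (hQ : IsCube Q) : MeasurableSet Q := by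
  obtain ⟨x, r, hr, rfl⟩ := hQ
  have : cubeSet x r = ⋂ i, ((fun y : Rn n => y i) ⁻¹' Icc (x i) (x i + r)) := by
    ext y
    simp [cubeSet, mem_Icc]
  rw [this]
  refine MeasurableSet.iInter fun i => measurableSet_Icc.preimage ?_
  exact (measurable_pi_apply i).comp ((MeasurableEquiv.toLp 2 (Fin n → ℝ)).symm).measurable

lemma cube_volume {Q : Set (Rn n)} (hQ : IsCube Q) :
    0 < volume Q ∧ volume Q ≠ ∞ := by
  obtain ⟨x, r, hr, rfl⟩ := hQ
  have hpre : cubeSet x r =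
      ((MeasurableEquiv.toLp 2 (Fin n → ℝ)).symm) ⁻¹' (univ.pi fun i => Icc (x i) (x i + r)) := by
    ext y
    simp only [cubeSet, mem_setOf_eq, mem_preimage, mem_univ_pi, mem_Icc]
    exact Iff.rfl
  have hmeas : MeasurableSet (univ.pi fun i : Fin n => Icc (x i) (x i + r)) :=
    MeasurableSet.univ_pi fun i => measurableSet_Icc
  have hv : volume (cubeSet x r) = ENNReal.ofReal r ^ n := by
    rw [hpre, (EuclideanSpace.volume_preserving_symm_measurableEquiv_toLp (Fin n)).measure_preimage
      hmeas.nullMeasurableSet, volume_pi_pi]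
    simp [Real.volume_Icc]
  constructor
  · rw [hv, pos_iff_ne_zero]
    exact pow_ne_zero _ (ENNReal.ofReal_pos.mpr hr).ne'
  · rw [hv]
    exact ENNReal.pow_ne_top ENNReal.ofReal_ne_top

lemma wInt_pos {w : Rn n → ℝ≥0∞} (hw : IsWeight w) {E : Set (Rn n)}
    (hvol : 0 < volume E) : 0 < wInt w E := by
  rw [pos_iff_ne_zero]
  intro h0
  unfold wInt at h0
  have h1 : w =ᵐ[volume.restrict E] 0 := (lintegral_eq_zero_iff hw.1).mp h0
  rw [Filter.EventuallyEq, ae_iff] at h1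
  simp only [Pi.zero_apply] at h1
  have h2 : {a : Rn n | ¬ w a = 0} = univ := eq_univ_of_forall fun x => (hw.2.1 x).1.ne'
  rw [h2, Measure.restrict_apply_univ] at h1
  exact hvol.ne' h1

lemma le_aprNorm {p : ℝ} {w : Rn n → ℝ≥0∞} {Q E : Set (Rn n)} (hQ : IsCube Q)
    (hEm : MeasurableSet E) (hEQ : E ⊆ Q) (hwE : 0 < wInt w E) :
    (volume E / volume Q) * (wInt w Q / wInt w E) ^ (1 / p) ≤ AprNorm p w := by
  unfold AprNorm
  exact le_iSup_of_le Q (le_iSup_of_le hQ (le_iSup_of_le E (le_iSup_of_le hEm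
    (le_iSup_of_le hEQ (le_iSup_of_le hwE le_rfl)))))

lemma le_aprConst {p : ℝ} {w : Rn n → ℝ≥0∞} {Q : Set (Rn n)} (hQ : IsCube Q) :
    wInt w Q ^ (1 / p) * dualWkNorm p (Q.indicator fun x => (w x)⁻¹) w / volume Q
      ≤ AprConst p w := by
  unfold AprConst
  exact le_iSup_of_le Q (le_iSup_of_le hQ le_rfl)

lemma mul_wInt_le_volume {w : Rn n → ℝ≥0∞} {E : Set (Rn n)}
    {y : ℝ≥0} (hy : y ≠ 0) (hE : ∀ x ∈ E, (y : ℝ≥0∞) < (w x)⁻¹) :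
    (y : ℝ≥0∞) * wInt w E ≤ volume E := by
  have h1 : wInt w E ≤ (y : ℝ≥0∞)⁻¹ * volume E := by
    unfold wInt
    calc ∫⁻ x in E, w x ≤ ∫⁻ _ in E, (y : ℝ≥0∞)⁻¹ := by
          refine setLIntegral_mono measurable_const fun x hx => ?_
          exact (ENNReal.lt_inv_iff_lt_inv.mp (hE x hx)).le
      _ = (y : ℝ≥0∞)⁻¹ * volume E := by rw [setLIntegral_const]
  calc (y : ℝ≥0∞) * wInt w E ≤ (y : ℝ≥0∞) * ((y : ℝ≥0∞)⁻¹ * volume E) :=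
        mul_le_mul_right h1 _
    _ = ((y : ℝ≥0∞) * (y : ℝ≥0∞)⁻¹) * volume E := (mul_assoc _ _ _).symm
    _ = volume E := by
        rw [ENNReal.mul_inv_cancel (by exact_mod_cast hy) coe_ne_top, one_mul]

end Helpers

section Part1

open MeasureTheory Set ENNReal NNReal

variable {n : ℕ}

lemma part1 (p : ℝ) (hp : 1 ≤ p) (w : Rn n → ℝ≥0∞) (hw : IsWeight w) :
    AprConst p w ≤ AprNorm p w := by
  unfold AprConst
  refine iSup₂_le fun Q hQ => ?_
  have hQm : MeasurableSet Q := cube_measurableSet hQ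
  have hwQtop : wInt w Q ≠ ∞ := hw.2.2 Q hQ
  set g : Rn n → ℝ≥0∞ := Q.indicator (fun x => (w x)⁻¹) with hgdef
  have hgm : Measurable g := (hw.1.inv).indicator hQm
  have hsub : ∀ c : ℝ≥0∞, {x | c < g x} ⊆ Q := by
    intro c x hx
    by_contra hxQ
    rw [mem_setOf_eq, hgdef, indicator_of_notMem hxQ] at hx
    exact (not_lt.mpr (zero_le (a := c))) hx
  by_cases hp1 : p = 1
  · subst hp1
    unfold dualWkNorm
    rw [if_pos rfl, show (1:ℝ)/1 = 1 by norm_num, ENNReal.rpow_one]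
    have hre : wInt w Q * essSup g (wMeasure w) / volume Q
        = essSup g (wMeasure w) * (wInt w Q / volume Q) := by
      simp only [div_eq_mul_inv]; ring
    rw [hre]
    refine ennreal_mul_le_of_forall_lt fun c hc => ?_
    rcases eq_or_ne c 0 with rfl | hc0
    · simp
    set E := {x | (c : ℝ≥0∞) < g x} with hE
    have hEQ : E ⊆ Q := hsub _
    have hEm : MeasurableSet E := hgm measurableSet_Ioi
    have hwE : wMeasure w E = wInt w E := withDensity_apply w hEm
    have hwEne : wMeasure w E ≠ 0 := by
      intro h0
      have hle : essSup g (wMeasure w) ≤ (c : ℝ≥0∞) := by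
        refine essSup_le_of_ae_le _ ?_
        change ∀ᵐ x ∂(wMeasure w), g x ≤ (c : ℝ≥0∞)
        rw [ae_iff]
        simpa [not_le, ← hE] using h0
      exact absurd hc (not_lt.mpr hle)
    have hwEpos : 0 < wInt w E := by rw [← hwE]; exact pos_iff_ne_zero.mpr hwEne
    have hwEQle : wInt w E ≤ wInt w Q := lintegral_mono_set hEQ
    have hwEtop : wInt w E ≠ ∞ := ne_top_of_le_ne_top hwQtop hwEQle
    have hkey : (c : ℝ≥0∞) * wInt w E ≤ volume E := by
      refine mul_wInt_le_volume hc0 fun x hx => ?_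
      have hx' : (c : ℝ≥0∞) < g x := hx
      rwa [hgdef, indicator_of_mem (hEQ hx)] at hx'
    have hcancel : (wInt w Q / wInt w E) * wInt w E = wInt w Q :=
      ENNReal.div_mul_cancel hwEpos.ne' hwEtop
    have h2 : (c : ℝ≥0∞) * wInt w Q ≤ volume E * (wInt w Q / wInt w E) := by
      calc (c : ℝ≥0∞) * wInt w Q = ((c : ℝ≥0∞) * wInt w E) * (wInt w Q / wInt w E) := by
            rw [mul_assoc, mul_comm (wInt w E), hcancel]
        _ ≤ volume E * (wInt w Q / wInt w E) := mul_le_mul_left hkey _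
    calc (c : ℝ≥0∞) * (wInt w Q / volume Q) = (c : ℝ≥0∞) * wInt w Q / volume Q := by
          simp only [div_eq_mul_inv]; ring
      _ ≤ volume E * (wInt w Q / wInt w E) / volume Q := ENNReal.div_le_div_right h2 _
      _ = (volume E / volume Q) * (wInt w Q / wInt w E) ^ ((1:ℝ)/1) := by
          rw [show (1:ℝ)/1 = 1 by norm_num, ENNReal.rpow_one]
          simp only [div_eq_mul_inv]; ring
      _ ≤ AprNorm 1 w := le_aprNorm hQ hEm hEQ hwEpos
  · have hp1' : 1 < p := hp.lt_of_ne (Ne.symm hp1)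
    have hppos : 0 < p := lt_trans one_pos hp1'
    have hpm1 : 0 < p - 1 := by linarith
    unfold dualWkNorm wkNormW wkNorm
    rw [if_neg hp1]
    set q : ℝ := p / (p - 1) with hqdef
    have hqpos : 0 < q := div_pos hppos hpm1
    have hoq : (1:ℝ)/q = 1 - 1/p := by rw [hqdef]; field_simp
    rw [ENNReal.mul_iSup, ENNReal.iSup_div]
    refine iSup_le fun y => ?_
    rcases eq_or_ne y 0 with rfl | hy0
    · simp
    set E := {x | (y : ℝ≥0∞) < g x} with hE
    have hEQ : E ⊆ Q := hsub _
    have hEm : MeasurableSet E := hgm measurableSet_Ioi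
    have hwE : wMeasure w E = wInt w E := withDensity_apply w hEm
    rcases eq_or_ne (wInt w E) 0 with h0 | hwEne
    · rw [hwE, h0, ENNReal.zero_rpow_of_pos (by positivity), mul_zero, mul_zero,
        ENNReal.zero_div]
      exact zero_le
    have hwEpos : 0 < wInt w E := pos_iff_ne_zero.mpr hwEne
    have hwEQle : wInt w E ≤ wInt w Q := lintegral_mono_set hEQ
    have hwEtop : wInt w E ≠ ∞ := ne_top_of_le_ne_top hwQtop hwEQle
    have hkey : (y : ℝ≥0∞) * wInt w E ≤ volume E := by
      refine mul_wInt_le_volume hy0 fun x hx => ?_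
      have hx' : (y : ℝ≥0∞) < g x := hx
      rwa [hgdef, indicator_of_mem (hEQ hx)] at hx'
    have hnum : wInt w Q ^ ((1:ℝ)/p) * ((y : ℝ≥0∞) * (wInt w E) ^ ((1:ℝ)/q))
        ≤ volume E * (wInt w Q / wInt w E) ^ ((1:ℝ)/p) := by
      have hsplitE : (wInt w E) ^ ((1:ℝ)/q) = wInt w E * (wInt w E) ^ (-(1/p) : ℝ) := by
        rw [show (1:ℝ)/q = 1 + (-(1/p)) by rw [hoq]; ring,
          ENNReal.rpow_add _ _ hwEne hwEtop, ENNReal.rpow_one]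
      rw [hsplitE]
      calc wInt w Q ^ ((1:ℝ)/p) * ((y : ℝ≥0∞) * (wInt w E * wInt w E ^ (-(1/p) : ℝ)))
          = ((y : ℝ≥0∞) * wInt w E) * (wInt w Q ^ ((1:ℝ)/p) * wInt w E ^ (-(1/p) : ℝ)) := by
            ring
        _ ≤ volume E * (wInt w Q ^ ((1:ℝ)/p) * wInt w E ^ (-(1/p) : ℝ)) :=
            mul_le_mul_left hkey _
        _ = volume E * (wInt w Q / wInt w E) ^ ((1:ℝ)/p) := by
            have hdr : (wInt w Q / wInt w E) ^ ((1:ℝ)/p)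
                = wInt w Q ^ ((1:ℝ)/p) * (wInt w E ^ ((1:ℝ)/p))⁻¹ := by
              rw [ENNReal.div_rpow_of_nonneg _ _ (by positivity)]
              rw [ENNReal.div_eq_inv_mul, mul_comm]
            rw [hdr, ENNReal.rpow_neg]
    calc wInt w Q ^ ((1:ℝ)/p) * ((y : ℝ≥0∞) * wMeasure w E ^ ((1:ℝ)/q)) / volume Q
        ≤ volume E * (wInt w Q / wInt w E) ^ ((1:ℝ)/p) / volume Q := by
          rw [hwE]; exact ENNReal.div_le_div_right hnum _
      _ = (volume E / volume Q) * (wInt w Q / wInt w E) ^ ((1:ℝ)/p) := by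
          simp only [div_eq_mul_inv]; ring
      _ ≤ AprNorm p w := le_aprNorm hQ hEm hEQ hwEpos

end Part1

section ClaimA

open MeasureTheory Set ENNReal NNReal

variable {n : ℕ}

lemma claimA {w : Rn n → ℝ≥0∞} (hw : IsWeight w) {p q : ℝ} (hp : 1 < p)
    (hq : q = p / (p - 1)) {Q E : Set (Rn n)} (hQ : IsCube Q) (hEm : MeasurableSet E)
    (hEQ : E ⊆ Q) (hwE0 : 0 < wInt w E)
    (hD : wkNormW (Q.indicator fun x => (w x)⁻¹) q w ≠ ∞) :
    volume E ≤ ENNReal.ofReal p * wkNormW (Q.indicator fun x => (w x)⁻¹) q w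
      * wInt w E ^ ((1:ℝ)/p) := by
  have hppos : 0 < p := lt_trans one_pos hp
  have hpm1 : 0 < p - 1 := by linarith
  have hq1 : 1 < q := by rw [hq, lt_div_iff₀ hpm1]; linarith
  have hq0 : 0 < q := lt_trans one_pos hq1
  have hqp : (1:ℝ)/q = 1 - 1/p := by rw [hq]; field_simp
  set g : Rn n → ℝ≥0∞ := Q.indicator (fun x => (w x)⁻¹) with hgdef
  have hgm : Measurable g := hw.1.inv.indicator (cube_measurableSet hQ)
  have hwQtop : wInt w Q ≠ ∞ := hw.2.2 Q hQ
  have hwEtop : wInt w E ≠ ∞ := ne_top_of_le_ne_top hwQtop (lintegral_mono_set hEQ)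
  -- Step 0: layer cake representation of `volume E`.
  have hstep0 : volume E
      = ∫⁻ t in Ioi (0:ℝ), ((wMeasure w).restrict E) {a | t < ((w a)⁻¹).toReal} := by
    have e1 : volume E = ∫⁻ x in E, w x * (w x)⁻¹ ∂volume := by
      rw [← setLIntegral_one]
      exact lintegral_congr fun x =>
        (ENNReal.mul_inv_cancel (hw.2.1 x).1.ne' (hw.2.1 x).2).symm
    have e2 : ∫⁻ x in E, w x * (w x)⁻¹ ∂volume = ∫⁻ x in E, (w x)⁻¹ ∂(wMeasure w) := by
      rw [wMeasure, setLIntegral_withDensity_eq_setLIntegral_mul volume (g := fun x => (w x)⁻¹) hw.1 hw.1.inv hEm]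
      rfl
    have e3 : ∫⁻ x in E, (w x)⁻¹ ∂(wMeasure w)
        = ∫⁻ x, ENNReal.ofReal (((w x)⁻¹).toReal) ∂((wMeasure w).restrict E) :=
      lintegral_congr fun x =>
        (ENNReal.ofReal_toReal (ENNReal.inv_ne_top.mpr (hw.2.1 x).1.ne')).symm
    have e4 := lintegral_eq_lintegral_meas_lt ((wMeasure w).restrict E)
      (Filter.Eventually.of_forall fun x => ENNReal.toReal_nonneg)
      (show AEMeasurable (fun x => ((w x)⁻¹).toReal) _ from hw.1.inv.ennreal_toReal.aemeasurable)
    rw [e1, e2, e3, e4]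
  have hwEr : ((wMeasure w).restrict E) univ = wInt w E := by
    rw [Measure.restrict_apply_univ, wMeasure, withDensity_apply w hEm]
    rfl
  -- pointwise domination
  have hbd : ∀ t : ℝ, 0 < t → ((wMeasure w).restrict E) {a | t < ((w a)⁻¹).toReal}
      ≤ wMeasure w {x | ENNReal.ofReal t < g x} := by
    intro t ht
    rw [Measure.restrict_apply' hEm]
    refine measure_mono fun x hx => ?_
    have hx1 : t < ((w x)⁻¹).toReal := hx.1
    have hxQ : x ∈ Q := hEQ hx.2
    have hinv : (w x)⁻¹ ≠ ∞ := ENNReal.inv_ne_top.mpr (hw.2.1 x).1.ne'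
    show ENNReal.ofReal t < g x
    rw [hgdef, indicator_of_mem hxQ]
    exact (ENNReal.ofReal_lt_iff_lt_toReal ht.le hinv).mpr hx1
  -- weak norm bound
  have hweak : ∀ t : ℝ, 0 < t →
      ENNReal.ofReal t * (wMeasure w {x | ENNReal.ofReal t < g x}) ^ ((1:ℝ)/q)
        ≤ wkNormW g q w := by
    intro t ht
    have hco : ENNReal.ofReal t = ((t.toNNReal : ℝ≥0) : ℝ≥0∞) := rfl
    rw [hco]
    exact le_iSup (fun y : ℝ≥0 =>
      (y : ℝ≥0∞) * (wMeasure w {x | (y : ℝ≥0∞) < g x}) ^ ((1:ℝ)/q)) t.toNNReal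
  rcases eq_or_ne (wkNormW g q w) 0 with hD0 | hDne0
  · -- degenerate case : the weak norm is zero
    have hzero : ∀ t : ℝ, 0 < t →
        ((wMeasure w).restrict E) {a | t < ((w a)⁻¹).toReal} = 0 := by
      intro t ht
      have h1 := hweak t ht
      rw [hD0, le_zero_iff] at h1
      have h2 : (wMeasure w {x | ENNReal.ofReal t < g x}) ^ ((1:ℝ)/q) = 0 := by
        rcases mul_eq_zero.mp h1 with h | h
        · exact absurd h (ENNReal.ofReal_pos.mpr ht).ne'
        · exact h
      have h3 : wMeasure w {x | ENNReal.ofReal t < g x} = 0 := by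
        rcases ENNReal.rpow_eq_zero_iff.mp h2 with h | h
        · exact h.1
        · exact absurd h.2 (not_lt.mpr (by positivity))
      exact le_antisymm (le_trans (hbd t ht) h3.le) zero_le
    rw [hstep0]
    calc (∫⁻ t in Ioi (0:ℝ), ((wMeasure w).restrict E) {a | t < ((w a)⁻¹).toReal})
        ≤ ∫⁻ _ in Ioi (0:ℝ), 0 := setLIntegral_mono measurable_const
            fun t ht => (hzero t ht).le
      _ = 0 := by simp
      _ ≤ _ := zero_le
  -- main case
  have ha : 0 < (wkNormW g q w).toReal := ENNReal.toReal_pos hDne0 hD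
  have hb : 0 < (wInt w E).toReal := ENNReal.toReal_pos hwE0.ne' hwEtop
  set A := (wkNormW g q w).toReal with hAdef
  set B := (wInt w E).toReal with hBdef
  have hDfin : wkNormW g q w = ENNReal.ofReal A := (ENNReal.ofReal_toReal hD).symm
  have hEfin : wInt w E = ENNReal.ofReal B := (ENNReal.ofReal_toReal hwEtop).symm
  set t0 : ℝ := A * B ^ (-(1/q)) with ht0def
  have hBq : (0:ℝ) < B ^ (-(1/q)) := Real.rpow_pos_of_pos hb _
  have ht0 : 0 < t0 := mul_pos ha hBq
  have htail : ∀ t : ℝ, 0 < t → wMeasure w {x | ENNReal.ofReal t < g x}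
      ≤ ENNReal.ofReal (A ^ q * t ^ (-q)) := by
    intro t ht
    have h1 : (wMeasure w {x | ENNReal.ofReal t < g x}) ^ ((1:ℝ)/q)
        ≤ wkNormW g q w / ENNReal.ofReal t := by
      rw [ENNReal.le_div_iff_mul_le (Or.inl (ENNReal.ofReal_pos.mpr ht).ne')
        (Or.inl ENNReal.ofReal_ne_top), mul_comm]
      exact hweak t ht
    have h2 : wMeasure w {x | ENNReal.ofReal t < g x}
        ≤ (wkNormW g q w / ENNReal.ofReal t) ^ q := by
      have h3 := ENNReal.rpow_le_rpow h1 hq0.le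
      rwa [← ENNReal.rpow_mul, one_div_mul_cancel hq0.ne', ENNReal.rpow_one] at h3
    calc wMeasure w {x | ENNReal.ofReal t < g x} ≤ (wkNormW g q w / ENNReal.ofReal t) ^ q :=
          h2
      _ = ENNReal.ofReal ((A / t) ^ q) := by
          rw [hDfin, ← ENNReal.ofReal_div_of_pos ht,
            ENNReal.ofReal_rpow_of_nonneg (div_nonneg ha.le ht.le) hq0.le]
      _ = ENNReal.ofReal (A ^ q * t ^ (-q)) := by
          rw [Real.div_rpow ha.le ht.le, Real.rpow_neg ht.le, div_eq_mul_inv]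
  -- split the integral
  have hlt : -q < -1 := by linarith
  have hInt : IntegrableOn (fun t : ℝ => A ^ q * t ^ (-q)) (Ioi t0) :=
    (integrableOn_Ioi_rpow_of_lt hlt ht0).const_mul _
  have hnn : 0 ≤ᵐ[volume.restrict (Ioi t0)] fun t : ℝ => A ^ q * t ^ (-q) := by
    refine (ae_restrict_iff' measurableSet_Ioi).mpr (Filter.Eventually.of_forall fun t ht => ?_)
    exact mul_nonneg (Real.rpow_nonneg ha.le _) (Real.rpow_nonneg (le_of_lt (ht0.trans ht)) _)
  have hpiece1 : (∫⁻ t in Ioc 0 t0, ((wMeasure w).restrict E) {a | t < ((w a)⁻¹).toReal})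
      ≤ wInt w E * ENNReal.ofReal t0 := by
    calc (∫⁻ t in Ioc 0 t0, ((wMeasure w).restrict E) {a | t < ((w a)⁻¹).toReal})
        ≤ ∫⁻ _ in Ioc 0 t0, wInt w E := by
          refine setLIntegral_mono measurable_const fun t _ => ?_
          rw [← hwEr]
          exact measure_mono (subset_univ _)
      _ = wInt w E * volume (Ioc 0 t0) := setLIntegral_const _ _
      _ = wInt w E * ENNReal.ofReal t0 := by rw [Real.volume_Ioc, sub_zero]
  have hpiece2 : (∫⁻ t in Ioi t0, ((wMeasure w).restrict E) {a | t < ((w a)⁻¹).toReal})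
      ≤ ENNReal.ofReal (A ^ q * (-t0 ^ (-q + 1) / (-q + 1))) := by
    have hmeas : Measurable fun t : ℝ => ENNReal.ofReal (A ^ q * t ^ (-q)) := by
      fun_prop
    calc (∫⁻ t in Ioi t0, ((wMeasure w).restrict E) {a | t < ((w a)⁻¹).toReal})
        ≤ ∫⁻ t in Ioi t0, ENNReal.ofReal (A ^ q * t ^ (-q)) :=
          setLIntegral_mono hmeas fun t ht =>
            le_trans (hbd t (ht0.trans ht)) (htail t (ht0.trans ht))
      _ = ENNReal.ofReal (∫ t in Ioi t0, A ^ q * t ^ (-q)) :=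
          (ofReal_integral_eq_lintegral_ofReal hInt hnn).symm
      _ = ENNReal.ofReal (A ^ q * (-t0 ^ (-q + 1) / (-q + 1))) := by
          rw [integral_const_mul, integral_Ioi_rpow_of_lt hlt ht0]
  -- the real computation
  have key1 : B * t0 = A * B ^ ((1:ℝ)/p) := by
    rw [ht0def, ← mul_assoc, mul_comm B A, mul_assoc]
    congr 1
    have h5 : B * B ^ (-(1/q)) = B ^ (1 + -(1/q)) := by
      rw [Real.rpow_add hb, Real.rpow_one]
    rw [h5]
    congr 1
    rw [hqp]; ring
  have key2 : A ^ q * (-t0 ^ (-q + 1) / (-q + 1)) = A * B ^ ((1:ℝ)/p) * (p - 1) := by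
    have hex : (-(1/q)) * (-q + 1) = (1:ℝ)/p := by
      have h7 : (-(1/q)) * (-q + 1) = 1 - 1/q := by
        linear_combination one_div_mul_cancel hq0.ne'
      rw [h7, hqp]; ring
    have h1 : t0 ^ (-q + 1) = A ^ (-q + 1) * B ^ ((1:ℝ)/p) := by
      rw [ht0def, Real.mul_rpow ha.le (Real.rpow_nonneg hb.le _), ← Real.rpow_mul hb.le, hex]
    have h2 : A ^ q * A ^ (-q + 1) = A := by
      rw [← Real.rpow_add ha]
      norm_num
    have h6 : (-1:ℝ) / (-q + 1) = p - 1 := by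
      rw [hq]
      field_simp
      ring
    calc A ^ q * (-t0 ^ (-q + 1) / (-q + 1))
        = (A ^ q * A ^ (-q + 1)) * B ^ ((1:ℝ)/p) * ((-1) / (-q + 1)) := by
          rw [h1]; ring
      _ = A * B ^ ((1:ℝ)/p) * (p - 1) := by rw [h2, h6]
  -- put everything together
  rw [hstep0, show Ioi (0:ℝ) = Ioc 0 t0 ∪ Ioi t0 from (Ioc_union_Ioi_eq_Ioi ht0.le).symm]
  calc (∫⁻ t in Ioc 0 t0 ∪ Ioi t0, ((wMeasure w).restrict E) {a | t < ((w a)⁻¹).toReal})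
      ≤ (∫⁻ t in Ioc 0 t0, ((wMeasure w).restrict E) {a | t < ((w a)⁻¹).toReal})
        + ∫⁻ t in Ioi t0, ((wMeasure w).restrict E) {a | t < ((w a)⁻¹).toReal} :=
        lintegral_union_le _ _ _
    _ ≤ wInt w E * ENNReal.ofReal t0 + ENNReal.ofReal (A ^ q * (-t0 ^ (-q + 1) / (-q + 1))) :=
        add_le_add hpiece1 hpiece2
    _ = ENNReal.ofReal (B * t0) + ENNReal.ofReal (A * B ^ ((1:ℝ)/p) * (p - 1)) := by
        rw [key2, hEfin, ← ENNReal.ofReal_mul hb.le]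
    _ = ENNReal.ofReal (B * t0 + A * B ^ ((1:ℝ)/p) * (p - 1)) :=
        (ENNReal.ofReal_add (mul_nonneg hb.le ht0.le)
          (mul_nonneg (mul_nonneg ha.le (Real.rpow_nonneg hb.le _)) (by linarith))).symm
    _ = ENNReal.ofReal (p * (A * B ^ ((1:ℝ)/p))) := by
        rw [key1]; congr 1; ring
    _ = ENNReal.ofReal p * wkNormW g q w * wInt w E ^ ((1:ℝ)/p) := by
        rw [ENNReal.ofReal_mul hppos.le, ENNReal.ofReal_mul ha.le,
          ← ENNReal.ofReal_rpow_of_nonneg hb.le (by positivity), ← hEfin, ← hDfin,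
          mul_assoc]
end ClaimA

section Part2

open MeasureTheory Set ENNReal NNReal

variable {n : ℕ}

lemma part2 (p : ℝ) (hp : 1 ≤ p) (w : Rn n → ℝ≥0∞) (hw : IsWeight w) :
    AprNorm p w ≤ ENNReal.ofReal p * AprConst p w := by
  unfold AprNorm
  refine iSup_le fun Q => iSup_le fun hQ => iSup_le fun E => iSup_le fun hEm =>
    iSup_le fun hEQ => iSup_le fun hwEpos => ?_
  set g : Rn n → ℝ≥0∞ := Q.indicator (fun x => (w x)⁻¹) with hgdef
  have hgm : Measurable g := hw.1.inv.indicator (cube_measurableSet hQ)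
  have hwQtop : wInt w Q ≠ ∞ := hw.2.2 Q hQ
  have hwEQle : wInt w E ≤ wInt w Q := lintegral_mono_set hEQ
  have hwEtop : wInt w E ≠ ∞ := ne_top_of_le_ne_top hwQtop hwEQle
  have hcancel : (wInt w Q / wInt w E) * wInt w E = wInt w Q :=
    ENNReal.div_mul_cancel hwEpos.ne' hwEtop
  have hDle : wInt w Q ^ (1 / p) * dualWkNorm p g w / volume Q ≤ AprConst p w := by
    rw [hgdef]
    exact le_aprConst hQ
  by_cases hp1 : p = 1
  · subst hp1
    have hD : dualWkNorm 1 g w = essSup g (wMeasure w) := by unfold dualWkNorm; rw [if_pos rfl]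
    have hvolE : volume E ≤ essSup g (wMeasure w) * wInt w E := by
      have h1 : volume E = ∫⁻ x in E, g x ∂(wMeasure w) := by
        rw [wMeasure, setLIntegral_withDensity_eq_setLIntegral_mul volume hw.1 hgm hEm]
        rw [← setLIntegral_one]
        refine setLIntegral_congr_fun hEm (fun x hx => ?_)
        show 1 = w x * g x
        rw [hgdef, indicator_of_mem (hEQ hx)]
        exact (ENNReal.mul_inv_cancel (hw.2.1 x).1.ne' (hw.2.1 x).2).symm
      have h2 : ∫⁻ x in E, g x ∂(wMeasure w)
          ≤ ∫⁻ _ in E, essSup g (wMeasure w) ∂(wMeasure w) :=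
        lintegral_mono_ae (ae_restrict_of_ae (ae_le_essSup g))
      have h3 : ∫⁻ _ in E, essSup g (wMeasure w) ∂(wMeasure w)
          = essSup g (wMeasure w) * wInt w E := by
        rw [setLIntegral_const, wMeasure, withDensity_apply w hEm]
        rfl
      rw [h1]
      exact h2.trans_eq h3
    have h2 : volume E * (wInt w Q / wInt w E) ≤ essSup g (wMeasure w) * wInt w Q := by
      calc volume E * (wInt w Q / wInt w E)
          ≤ (essSup g (wMeasure w) * wInt w E) * (wInt w Q / wInt w E) :=
            mul_le_mul_left hvolE _
        _ = essSup g (wMeasure w) * wInt w Q := by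
            rw [mul_assoc, mul_comm (wInt w E), hcancel]
    calc (volume E / volume Q) * (wInt w Q / wInt w E) ^ ((1:ℝ)/1)
        = volume E * (wInt w Q / wInt w E) / volume Q := by
          rw [show (1:ℝ)/1 = 1 by norm_num, ENNReal.rpow_one]
          simp only [div_eq_mul_inv]; ring
      _ ≤ essSup g (wMeasure w) * wInt w Q / volume Q := ENNReal.div_le_div_right h2 _
      _ = wInt w Q ^ ((1:ℝ)/1) * dualWkNorm 1 g w / volume Q := by
          rw [hD, show (1:ℝ)/1 = 1 by norm_num, ENNReal.rpow_one, mul_comm]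
      _ ≤ AprConst 1 w := hDle
      _ ≤ ENNReal.ofReal 1 * AprConst 1 w := by rw [ENNReal.ofReal_one, one_mul]
  · have hp1' : 1 < p := hp.lt_of_ne (Ne.symm hp1)
    have hppos : 0 < p := lt_trans one_pos hp1'
    set q : ℝ := p / (p - 1) with hqdef
    have hD : dualWkNorm p g w = wkNormW g q w := by unfold dualWkNorm; rw [if_neg hp1]
    rw [hD] at hDle
    rcases eq_or_ne (wkNormW g q w) ∞ with hDtop | hDne
    · have hvolQ := cube_volume hQ
      have hwQpos : 0 < wInt w Q := wInt_pos hw hvolQ.1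
      have htop : wInt w Q ^ (1 / p) * wkNormW g q w / volume Q = ∞ := by
        rw [hDtop, ENNReal.mul_top (ENNReal.rpow_pos hwQpos hwQtop).ne',
          ENNReal.top_div_of_ne_top hvolQ.2]
      have hA : AprConst p w = ∞ := top_le_iff.mp (htop ▸ hDle)
      rw [hA, ENNReal.mul_top (ENNReal.ofReal_pos.mpr hppos).ne']
      exact le_top
    · have hkeyA : volume E ≤ ENNReal.ofReal p * wkNormW g q w * wInt w E ^ ((1:ℝ)/p) := by
        rw [hgdef]
        exact claimA hw hp1' hqdef hQ hEm hEQ hwEpos (by rw [← hgdef]; exact hDne)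
      have hEp : wInt w E ^ ((1:ℝ)/p) ≠ 0 := (ENNReal.rpow_pos hwEpos hwEtop).ne'
      have hEptop : wInt w E ^ ((1:ℝ)/p) ≠ ∞ :=
        ENNReal.rpow_ne_top_of_nonneg (by positivity) hwEtop
      have hdr : (wInt w Q / wInt w E) ^ ((1:ℝ)/p)
          = wInt w Q ^ ((1:ℝ)/p) * (wInt w E ^ ((1:ℝ)/p))⁻¹ := by
        rw [ENNReal.div_rpow_of_nonneg _ _ (by positivity)]
        rw [ENNReal.div_eq_inv_mul, mul_comm]
      have hnum : volume E * (wInt w Q / wInt w E) ^ ((1:ℝ)/p)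
          ≤ ENNReal.ofReal p * (wInt w Q ^ ((1:ℝ)/p) * wkNormW g q w) := by
        calc volume E * (wInt w Q / wInt w E) ^ ((1:ℝ)/p)
            ≤ (ENNReal.ofReal p * wkNormW g q w * wInt w E ^ ((1:ℝ)/p))
              * (wInt w Q / wInt w E) ^ ((1:ℝ)/p) := mul_le_mul_left hkeyA _
          _ = ENNReal.ofReal p * (wInt w Q ^ ((1:ℝ)/p) * wkNormW g q w)
              * (wInt w E ^ ((1:ℝ)/p) * (wInt w E ^ ((1:ℝ)/p))⁻¹) := by
              rw [hdr]; ring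
          _ = ENNReal.ofReal p * (wInt w Q ^ ((1:ℝ)/p) * wkNormW g q w) := by
              rw [ENNReal.mul_inv_cancel hEp hEptop, mul_one]
      calc (volume E / volume Q) * (wInt w Q / wInt w E) ^ ((1:ℝ)/p)
          = volume E * (wInt w Q / wInt w E) ^ ((1:ℝ)/p) / volume Q := by
            simp only [div_eq_mul_inv]; ring
        _ ≤ ENNReal.ofReal p * (wInt w Q ^ ((1:ℝ)/p) * wkNormW g q w) / volume Q :=
            ENNReal.div_le_div_right hnum _
        _ = ENNReal.ofReal p * (wInt w Q ^ ((1:ℝ)/p) * wkNormW g q w / volume Q) := by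
            simp only [div_eq_mul_inv]; ring
        _ ≤ ENNReal.ofReal p * AprConst p w := mul_le_mul_right hDle _

end Part2

/-- `[w]_{A_p^R} ≤ ‖w‖_{A_p^R} ≤ p [w]_{A_p^R}` for `p ≥ 1`. -/
theorem stmt8 {n : ℕ} (p : ℝ) (hp : 1 ≤ p) (w : Rn n → ℝ≥0∞) (hw : IsWeight w) :
    AprConst p w ≤ AprNorm p w ∧ AprNorm p w ≤ ENNReal.ofReal p * AprConst p w := by
  exact ⟨part1 p hp w hw, part2 p hp w hw⟩
end
end

section
/- There exist a measurable function $h$ on $\mathbb{R}^n$ and weights $u, v$ such that the inequality $\|h/v\|_{L^{p,\infty}(uv^p)} \leq C\|h\|_{L^{p,\infty}(u)}$ fails for every constant $C$: namely, taking $h(x) = |x|^{-n/p}\chi_{\{|x| \geq 1\}}$, $u = 1$, and $v = h + \chi_{\{|x| < 1\}}$, one has $\|h\|_{L^{p,\infty}(u)} < \infty$ but $\|h/v\|_{L^{p,\infty}(uv^p)} = \infty$, for any $0 < p < \infty$. -/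
open MeasureTheory Set ENNReal NNReal

noncomputable section

variable {n : ℕ}

/-- Counterexample: with `h(x) = |x|^{-n/p} χ_{\{|x| ≥ 1\}}`, `u = 1`,
`v = h + χ_{\{|x| < 1\}}`, one has `‖h‖_{L^{p,∞}(u)} < ∞` but
`‖h/v‖_{L^{p,∞}(uv^p)} = ∞`. -/
theorem stmt18 (n : ℕ) (hn : 1 ≤ n) (p : ℝ) (hp : 0 < p) :
    wkNormW (fun x : Rn n =>
        if 1 ≤ ‖x‖ then ENNReal.ofReal (‖x‖ ^ (-((n : ℝ) / p))) else 0) p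
      (fun _ => 1) < ∞ ∧
    wkNormW (fun x : Rn n =>
        (if 1 ≤ ‖x‖ then ENNReal.ofReal (‖x‖ ^ (-((n : ℝ) / p))) else 0) /
          (if 1 ≤ ‖x‖ then ENNReal.ofReal (‖x‖ ^ (-((n : ℝ) / p))) else 1)) p
      (fun x => 1 *
        (if 1 ≤ ‖x‖ then ENNReal.ofReal (‖x‖ ^ (-((n : ℝ) / p))) else 1) ^ p) = ∞ := by
  haveI : NeZero n := ⟨by omega⟩
  haveI : Nontrivial (Rn n) := by
    have : (0 : Rn n) ≠ EuclideanSpace.single ⟨0, by omega⟩ (1 : ℝ) := by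
      intro h
      have := congrArg (fun v : Rn n => v ⟨0, by omega⟩) h.symm
      simp [EuclideanSpace.single_apply] at this
    exact ⟨_, _, this⟩
  set c := volume (Metric.ball (0 : Rn n) 1) with hcdef
  have hcfin : c ≠ ∞ := measure_ball_lt_top.ne
  have hc0 : c ≠ 0 := (Metric.measure_ball_pos _ _ one_pos).ne'
  have hfr : Module.finrank ℝ (Rn n) = n := finrank_euclideanSpace_fin
  have hn0 : (n : ℝ) ≠ 0 := Nat.cast_ne_zero.2 (by omega)
  have hnpos : (0:ℝ) < n := by positivity
  constructor
  · -- Part 1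
    have hvol1 : wMeasure (fun _ : Rn n => (1 : ℝ≥0∞)) = volume := withDensity_one
    rw [wkNormW, wkNorm, hvol1]
    have key : ∀ y : ℝ≥0, (y : ℝ≥0∞) *
        (volume {x : Rn n | (y : ℝ≥0∞) <
          (if 1 ≤ ‖x‖ then ENNReal.ofReal (‖x‖ ^ (-((n : ℝ) / p))) else 0)}) ^ (1 / p)
        ≤ c ^ (1 / p) := by
      intro y
      rcases eq_or_ne y 0 with rfl | hy
      · simp
      have hy' : (0 : ℝ) < y := hy.bot_lt
      set R : ℝ := (y : ℝ) ^ (-(p / (n : ℝ))) with hR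
      have hRpos : 0 < R := Real.rpow_pos_of_pos hy' _
      have hsub : {x : Rn n | (y : ℝ≥0∞) <
          (if 1 ≤ ‖x‖ then ENNReal.ofReal (‖x‖ ^ (-((n : ℝ) / p))) else 0)} ⊆
          Metric.ball 0 R := by
        intro x hx
        simp only [Set.mem_setOf_eq] at hx
        by_cases hx1 : 1 ≤ ‖x‖
        · rw [if_pos hx1] at hx
          have hxpos : (0 : ℝ) < ‖x‖ := lt_of_lt_of_le one_pos hx1
          have h1 : (y : ℝ) < ‖x‖ ^ (-((n : ℝ) / p)) := by
            rw [← ENNReal.ofReal_coe_nnreal] at hx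
            exact (ENNReal.ofReal_lt_ofReal_iff (Real.rpow_pos_of_pos hxpos _)).1 hx
          have h2 : (‖x‖ ^ (-((n : ℝ) / p))) ^ (-(p / (n : ℝ))) < R :=
            Real.rpow_lt_rpow_of_neg hy' h1 (by
              rw [neg_lt, neg_zero]; positivity)
          have h3 : (‖x‖ ^ (-((n : ℝ) / p))) ^ (-(p / (n : ℝ))) = ‖x‖ := by
            rw [← Real.rpow_mul hxpos.le]
            rw [show (-((n : ℝ) / p)) * (-(p / (n : ℝ))) = 1 by
              field_simp]
            exact Real.rpow_one _
          rw [h3] at h2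
          exact mem_ball_zero_iff.2 h2
        · rw [if_neg hx1] at hx
          simp at hx
      have hball : volume (Metric.ball (0 : Rn n) R) = ENNReal.ofReal (R ^ n) * c := by
        rw [Measure.addHaar_ball _ _ hRpos.le, hfr]
      have hRn : ENNReal.ofReal (R ^ n) = (y : ℝ≥0∞) ^ (-p) := by
        have h1 : R ^ n = (y : ℝ) ^ (-p) := by
          rw [← Real.rpow_natCast R n, hR, ← Real.rpow_mul hy'.le]
          congr 1
          field_simp
        rw [h1, ← ENNReal.ofReal_rpow_of_pos hy', ENNReal.ofReal_coe_nnreal]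
      calc (y : ℝ≥0∞) * (volume {x : Rn n | (y : ℝ≥0∞) <
            (if 1 ≤ ‖x‖ then ENNReal.ofReal (‖x‖ ^ (-((n : ℝ) / p))) else 0)}) ^ (1 / p)
          ≤ (y : ℝ≥0∞) * ((y : ℝ≥0∞) ^ (-p) * c) ^ (1 / p) := by
            gcongr
            rw [← hRn, ← hball]
            exact measure_mono hsub
        _ = c ^ (1 / p) := by
            rw [ENNReal.mul_rpow_of_nonneg _ _ (by positivity), ← ENNReal.rpow_mul,
              ← mul_assoc, show -p * (1 / p) = -1 by field_simp,
              ENNReal.rpow_neg_one,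
              ENNReal.mul_inv_cancel (by exact_mod_cast hy) ENNReal.coe_ne_top, one_mul]
    exact lt_of_le_of_lt (iSup_le key) (ENNReal.rpow_lt_top_of_nonneg (by positivity) hcfin)
  · -- Part 2
    set w : Rn n → ℝ≥0∞ := fun x => 1 *
        (if 1 ≤ ‖x‖ then ENNReal.ofReal (‖x‖ ^ (-((n : ℝ) / p))) else 1) ^ p with hwdef
    set g : Rn n → ℝ≥0∞ := fun x =>
        (if 1 ≤ ‖x‖ then ENNReal.ofReal (‖x‖ ^ (-((n : ℝ) / p))) else 0) /
          (if 1 ≤ ‖x‖ then ENNReal.ofReal (‖x‖ ^ (-((n : ℝ) / p))) else 1) with hgdef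
    -- the weighted measure of {1 ≤ ‖x‖} is infinite
    have hTmeas : MeasurableSet {x : Rn n | 1 ≤ ‖x‖} :=
      (isClosed_le continuous_const continuous_norm).measurableSet
    have hwT : ∀ x : Rn n, 1 ≤ ‖x‖ → w x = ENNReal.ofReal (‖x‖ ^ (-(n : ℝ))) := by
      intro x hx1
      have hxpos : (0 : ℝ) < ‖x‖ := lt_of_lt_of_le one_pos hx1
      simp only [hwdef, if_pos hx1, one_mul]
      rw [ENNReal.ofReal_rpow_of_pos (Real.rpow_pos_of_pos hxpos _),
        ← Real.rpow_mul hxpos.le]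
      congr 2
      field_simp
    -- annuli
    set A : ℕ → Set (Rn n) := fun k =>
      Metric.ball 0 ((2 : ℝ) ^ (k + 1)) \ Metric.ball 0 ((2 : ℝ) ^ k) with hAdef
    have hAmeas : ∀ k, MeasurableSet (A k) := fun k =>
      measurableSet_ball.diff measurableSet_ball
    have hAnorm : ∀ k (x : Rn n), x ∈ A k → (2:ℝ)^k ≤ ‖x‖ ∧ ‖x‖ < (2:ℝ)^(k+1) := by
      intro k x hx
      obtain ⟨h1, h2⟩ := hx
      rw [mem_ball_zero_iff] at h1
      constructor
      · by_contra hlt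
        exact h2 (mem_ball_zero_iff.2 (not_le.1 hlt))
      · exact h1
    have hAsub : (⋃ k, A k) ⊆ {x : Rn n | 1 ≤ ‖x‖} := by
      intro x hx
      obtain ⟨k, hk⟩ := Set.mem_iUnion.1 hx
      have := (hAnorm k x hk).1
      exact le_trans (one_le_pow₀ one_le_two) this
    have hAdisj2 : ∀ k l, k < l → Disjoint (A k) (A l) := by
      intro k l hlt
      rw [Set.disjoint_left]
      intro x hxk hxl
      have h1 := (hAnorm k x hxk).2
      have h2 := (hAnorm l x hxl).1
      have h3 : (2:ℝ)^(k+1) ≤ (2:ℝ)^l := pow_le_pow_right₀ one_le_two (by omega)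
      linarith
    have hAdisj : Pairwise (Function.onFun Disjoint A) := by
      intro k l hkl
      rcases hkl.lt_or_gt with h | h
      · exact hAdisj2 k l h
      · exact (hAdisj2 l k h).symm
    -- lower bound on each annulus
    have hAvol : ∀ k : ℕ, ENNReal.ofReal (1/2 : ℝ) * c ≤ ∫⁻ x in A k, w x := by
      intro k
      set t : ℝ := ((2 : ℝ) ^ (k+1)) ^ n with htdef
      set u : ℝ := ((2 : ℝ) ^ k) ^ n with hudef
      have htpos : 0 < t := by positivity
      have hupos : 0 < u := by positivity
      have hwlow : ∀ x ∈ A k, ENNReal.ofReal t⁻¹ ≤ w x := by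
        intro x hx
        obtain ⟨h1, h2⟩ := hAnorm k x hx
        have hx1 : 1 ≤ ‖x‖ := le_trans (one_le_pow₀ one_le_two) h1
        have hxpos : (0:ℝ) < ‖x‖ := lt_of_lt_of_le one_pos hx1
        rw [hwT x hx1]
        apply ENNReal.ofReal_le_ofReal
        have : ((2:ℝ)^(k+1)) ^ (-(n:ℝ)) ≤ ‖x‖ ^ (-(n:ℝ)) :=
          Real.rpow_le_rpow_of_nonpos hxpos h2.le (neg_nonpos.mpr hnpos.le)
        calc t⁻¹ = ((2:ℝ)^(k+1)) ^ (-(n:ℝ)) := by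
              rw [Real.rpow_neg (by positivity), Real.rpow_natCast]
          _ ≤ _ := this
      have hvb : ∀ r : ℝ, 0 ≤ r →
          volume (Metric.ball (0 : Rn n) r) = ENNReal.ofReal (r ^ n) * c := by
        intro r hr
        rw [Measure.addHaar_ball _ _ hr, hfr]
      have hvolA : volume (A k) = (ENNReal.ofReal t - ENNReal.ofReal u) * c := by
        have hd : volume (A k) =
            volume (Metric.ball (0 : Rn n) ((2:ℝ) ^ (k+1))) -
              volume (Metric.ball (0 : Rn n) ((2:ℝ) ^ k)) :=
          measure_diff (Metric.ball_subset_ball (pow_le_pow_right₀ one_le_two (by omega)))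
            measurableSet_ball.nullMeasurableSet measure_ball_lt_top.ne
        rw [hd, hvb _ (by positivity), hvb _ (by positivity),
          ENNReal.sub_mul (fun _ _ => hcfin)]
      calc ENNReal.ofReal (1/2 : ℝ) * c
          ≤ ENNReal.ofReal t⁻¹ * volume (A k) := by
            rw [hvolA, ← mul_assoc]
            gcongr
            rw [← ENNReal.ofReal_sub _ hupos.le, ← ENNReal.ofReal_mul (by positivity)]
            apply ENNReal.ofReal_le_ofReal
            have hut : u / t = (1/2 : ℝ) ^ n := by
              rw [htdef, hudef, ← div_pow]
              congr 1
              rw [pow_succ]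
              field_simp
            have h2n : (1/2 : ℝ) ^ n ≤ 1/2 := by
              calc (1/2 : ℝ) ^ n ≤ (1/2 : ℝ) ^ 1 :=
                    pow_le_pow_of_le_one (by norm_num) (by norm_num) hn
                _ = 1/2 := pow_one _
            have : t⁻¹ * (t - u) = 1 - u / t := by
              field_simp
            rw [this, hut] at *
            linarith
        _ ≤ ∫⁻ x in A k, w x := by
            rw [← setLIntegral_const (A k) (ENNReal.ofReal t⁻¹)]
            exact setLIntegral_mono' (hAmeas k) hwlow
    have hT : wMeasure w {x : Rn n | 1 ≤ ‖x‖} = ∞ := by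
      rw [wMeasure, withDensity_apply _ hTmeas]
      rw [eq_top_iff]
      calc (⊤ : ℝ≥0∞) = ∑' _ : ℕ, ENNReal.ofReal (1/2 : ℝ) * c :=
            (ENNReal.tsum_const_eq_top_of_ne_zero
              (mul_ne_zero (by simp) hc0)).symm
        _ ≤ ∑' k, ∫⁻ x in A k, w x := ENNReal.tsum_le_tsum hAvol
        _ = ∫⁻ x in ⋃ k, A k, w x := (lintegral_iUnion hAmeas hAdisj _).symm
        _ ≤ ∫⁻ x in {x : Rn n | 1 ≤ ‖x‖}, w x := lintegral_mono_set hAsub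
    -- conclude
    rw [wkNormW, wkNorm, eq_top_iff]
    have hgT : {x : Rn n | 1 ≤ ‖x‖} ⊆ {x : Rn n | ((1/2 : ℝ≥0) : ℝ≥0∞) < g x} := by
      intro x hx1
      simp only [Set.mem_setOf_eq] at hx1 ⊢
      have hxpos : (0:ℝ) < ‖x‖ := lt_of_lt_of_le one_pos hx1
      have hg1 : g x = 1 := by
        simp only [hgdef, if_pos hx1]
        exact ENNReal.div_self
          (ENNReal.ofReal_pos.2 (Real.rpow_pos_of_pos hxpos _)).ne'
          ENNReal.ofReal_ne_top
      rw [hg1]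
      exact lt_of_lt_of_le (by norm_num : ((1/2 : ℝ≥0) : ℝ≥0∞) < ((1:ℝ≥0):ℝ≥0∞)) (by simp)
    have hSinf : wMeasure w {x : Rn n | ((1/2 : ℝ≥0) : ℝ≥0∞) < g x} = ∞ :=
      eq_top_iff.2 (hT ▸ measure_mono hgT)
    calc (⊤ : ℝ≥0∞) = ((1/2 : ℝ≥0) : ℝ≥0∞) *
          (wMeasure w {x : Rn n | ((1/2 : ℝ≥0) : ℝ≥0∞) < g x}) ^ (1 / p) := by
          rw [hSinf, ENNReal.top_rpow_of_pos (by positivity), ENNReal.mul_top (by norm_num)]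
      _ ≤ _ := le_iSup (fun y : ℝ≥0 => (y : ℝ≥0∞) *
          (wMeasure w {x : Rn n | (y : ℝ≥0∞) < g x}) ^ (1 / p)) (1/2 : ℝ≥0)
end
end
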